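/- arXiv:1101.0774 — 5 statements merged into one kernel-verified Lean document; each statement's English description precedes it below -/
import Mathlib

section
/- For analytic polynomials f, p ∈ ℂ[z₁,…,zₙ] and 1 ≤ j ≤ n, the following identity holds on the Bergman space L²_a(𝔹ₙ): M*_{z_j} M_p f − M_p M*_{z_j} f = Σ_{k=0}^∞ (N+1+n)^{-(k+1)} [(M_{∂_j R^k p} − M*_{z_j} M_{R^{k+1} p}) f], where the series converges (e.g., it terminates on each monomial component). -/
open MeasureTheory Metric

private lemma real_pts (nn A B aj bj : ℝ) (hS' : nn + A + B ≠ 0) (k : ℕ) :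
    (1 / (nn + A + B) ^ (k + 1)) * (A ^ k * aj - A ^ (k + 1) * (aj + bj) / (nn + A + B))
      = (aj / (nn + A + B) - A * (aj + bj) / (nn + A + B) ^ 2) * (A / (nn + A + B)) ^ k := by
  rw [div_pow]
  field_simp
  ring

private lemma real_key (nn A B aj bj : ℝ) (hnn : 0 < nn) (h0A : 0 ≤ A) (h0B : 0 ≤ B) :
    ∑' k : ℕ, (1 / (nn + A + B) ^ (k + 1)) * (A ^ k * aj - A ^ (k + 1) * (aj + bj) / (nn + A + B))
      = (aj + bj) / (nn + A + B) - bj / (nn + B) := by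
  have hS : (0:ℝ) < nn + A + B := by linarith
  have hS' : nn + A + B ≠ 0 := ne_of_gt hS
  have hnB : (0:ℝ) < nn + B := by linarith
  have hnB' : nn + B ≠ 0 := ne_of_gt hnB
  have hx0 : 0 ≤ A / (nn + A + B) := div_nonneg h0A hS.le
  have hx1 : A / (nn + A + B) < 1 := by rw [div_lt_one hS]; linarith
  rw [tsum_congr (real_pts nn A B aj bj hS'), tsum_mul_left,
    tsum_geometric_of_lt_one hx0 hx1]
  have h1 : 1 - A / (nn + A + B) = (nn + B) / (nn + A + B) := by
    field_simp; ring
  rw [h1, inv_div]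
  field_simp
  ring

private lemma real_summable (nn A B aj bj : ℝ) (hnn : 0 < nn) (h0A : 0 ≤ A) (h0B : 0 ≤ B) :
    Summable (fun k : ℕ =>
      (1 / (nn + A + B) ^ (k + 1)) * (A ^ k * aj - A ^ (k + 1) * (aj + bj) / (nn + A + B))) := by
  have hS : (0:ℝ) < nn + A + B := by linarith
  have hx0 : 0 ≤ A / (nn + A + B) := div_nonneg h0A hS.le
  have hx1 : A / (nn + A + B) < 1 := by rw [div_lt_one hS]; linarith
  have := (summable_geometric_of_lt_one hx0 hx1).mul_left
    (aj / (nn + A + B) - A * (aj + bj) / (nn + A + B) ^ 2)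
  exact this.congr fun k => (real_pts nn A B aj bj (ne_of_gt hS) k).symm

private lemma nat_key (nn A B aj bj : ℕ) (hnn : 0 < nn) :
    ∑' k : ℕ, (1 / ((nn:ℝ) + A + B) ^ (k + 1)) *
        ((A:ℝ) ^ k * (aj:ℝ) - (A:ℝ) ^ (k + 1) * ((aj + bj : ℕ):ℝ) / ((nn:ℝ) + A + B))
      = ((aj + bj : ℕ):ℝ) / ((nn:ℝ) + A + B) - (bj:ℝ) / ((nn:ℝ) + B) := by
  push_cast
  exact real_key nn A B aj bj (by exact_mod_cast hnn) (Nat.cast_nonneg A) (Nat.cast_nonneg B)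

private lemma nat_summable (nn A B aj bj : ℕ) (hnn : 0 < nn) :
    Summable (fun k : ℕ => (1 / ((nn:ℝ) + A + B) ^ (k + 1)) *
        ((A:ℝ) ^ k * (aj:ℝ) - (A:ℝ) ^ (k + 1) * ((aj + bj : ℕ):ℝ) / ((nn:ℝ) + A + B))) := by
  have := real_summable nn A B aj bj (by exact_mod_cast hnn) (Nat.cast_nonneg A)
    (Nat.cast_nonneg B)
  exact this.congr fun k => by push_cast; ring

theorem commutator_radial_derivative_identity (n : ℕ) (hn : 0 < n)
    (a b : (Fin n → ℕ) → ℂ)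
    (ha : (Function.support a).Finite) (hb : (Function.support b).Finite)
    (j : Fin n) (z : Fin n → ℂ) :
    (∑ᶠ α : Fin n → ℕ, ∑ᶠ β : Fin n → ℕ, a α * b β *
          ((((α j + β j : ℕ) : ℝ) / (n + (∑ i, α i) + (∑ i, β i)) : ℝ) : ℂ) *
          ∏ i, z i ^ (α i + β i - if i = j then 1 else 0))
      - (∑ᶠ α : Fin n → ℕ, a α * ∏ i, z i ^ α i) *
          (∑ᶠ β : Fin n → ℕ, b β * ((((β j : ℕ) : ℝ) / (n + ∑ i, β i) : ℝ) : ℂ) *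
            ∏ i, z i ^ (β i - if i = j then 1 else 0))
      = ∑' k : ℕ, ∑ᶠ α : Fin n → ℕ, ∑ᶠ β : Fin n → ℕ, a α * b β *
          (((1 / (n + (∑ i, α i) + (∑ i, β i) : ℝ) ^ (k + 1)) *
            (((∑ i, α i : ℕ) : ℝ) ^ k * (α j : ℝ) -
              ((∑ i, α i : ℕ) : ℝ) ^ (k + 1) * ((α j + β j : ℕ) : ℝ) /
                (n + (∑ i, α i) + (∑ i, β i)))) : ℝ) *
          ∏ i, z i ^ (α i + β i - if i = j then 1 else 0) := by
  classical
  set s : Finset (Fin n → ℕ) := ha.toFinset with hs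
  set t : Finset (Fin n → ℕ) := hb.toFinset with ht
  have hmema : ∀ {α : Fin n → ℕ}, a α ≠ 0 → α ∈ s := fun h => ha.mem_toFinset.2 h
  have hmemb : ∀ {β : Fin n → ℕ}, b β ≠ 0 → β ∈ t := fun h => hb.mem_toFinset.2 h
  -- notation for the summand of the RHS
  -- Step 1: rewrite LHS finsums as finite sums
  rw [finsum_eq_sum_of_support_subset (fun α => a α * ∏ i, z i ^ α i)
      (s := s) (fun α hα => hmema (left_ne_zero_of_mul hα)),
    finsum_eq_sum_of_support_subset _ (s := t)
      (fun β (hβ : _ ≠ 0) => hmemb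
        (left_ne_zero_of_mul (left_ne_zero_of_mul hβ))),
    finsum_congr (fun α => finsum_eq_sum_of_support_subset _ (s := t)
      (fun β (hβ : _ ≠ 0) => hmemb
        (right_ne_zero_of_mul (left_ne_zero_of_mul (left_ne_zero_of_mul hβ))))),
    finsum_eq_sum_of_support_subset _ (s := s) (fun α (hα : _ ≠ 0) => by
      obtain ⟨β, -, hβ⟩ := Finset.exists_ne_zero_of_sum_ne_zero hα
      exact hmema (left_ne_zero_of_mul (left_ne_zero_of_mul (left_ne_zero_of_mul hβ)))),
    tsum_congr (fun k =>
      (finsum_congr (fun α => finsum_eq_sum_of_support_subset _ (s := t)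
        (fun β (hβ : _ ≠ 0) => hmemb
          (right_ne_zero_of_mul (left_ne_zero_of_mul (left_ne_zero_of_mul hβ)))))).trans
      (finsum_eq_sum_of_support_subset _ (s := s) (fun α (hα : _ ≠ 0) => by
        obtain ⟨β, -, hβ⟩ := Finset.exists_ne_zero_of_sum_ne_zero hα
        exact hmema (left_ne_zero_of_mul (left_ne_zero_of_mul (left_ne_zero_of_mul hβ))))))]
  -- summability of each (α, β)-series
  have hsumm : ∀ α β : Fin n → ℕ, Summable (fun k : ℕ => a α * b β *
      (((1 / (n + (∑ i, α i) + (∑ i, β i) : ℝ) ^ (k + 1)) *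
        (((∑ i, α i : ℕ) : ℝ) ^ k * (α j : ℝ) -
          ((∑ i, α i : ℕ) : ℝ) ^ (k + 1) * ((α j + β j : ℕ) : ℝ) /
            (n + (∑ i, α i) + (∑ i, β i)))) : ℝ) *
      ∏ i, z i ^ (α i + β i - if i = j then 1 else 0)) := fun α β =>
    ((Complex.summable_ofReal.2
      (nat_summable n (∑ i, α i) (∑ i, β i) (α j) (β j) hn)).mul_left
        (a α * b β)).mul_right _
  -- swap the tsum with the finite sums
  rw [Summable.tsum_finsetSum (fun α _ => summable_sum (fun β _ => hsumm α β))]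
  rw [Finset.sum_congr rfl (fun α _ => Summable.tsum_finsetSum (fun β _ => hsumm α β))]
  rw [Finset.sum_mul_sum, ← Finset.sum_sub_distrib]
  refine Finset.sum_congr rfl fun α _ => ?_
  rw [← Finset.sum_sub_distrib]
  refine Finset.sum_congr rfl fun β _ => ?_
  -- pointwise identity for a fixed pair (α, β)
  have htsum : (∑' k : ℕ, a α * b β *
      (((1 / (n + (∑ i, α i) + (∑ i, β i) : ℝ) ^ (k + 1)) *
        (((∑ i, α i : ℕ) : ℝ) ^ k * (α j : ℝ) -
          ((∑ i, α i : ℕ) : ℝ) ^ (k + 1) * ((α j + β j : ℕ) : ℝ) /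
            (n + (∑ i, α i) + (∑ i, β i)))) : ℝ) *
      ∏ i, z i ^ (α i + β i - if i = j then 1 else 0))
      = a α * b β *
        ((((α j + β j : ℕ):ℝ) / ((n:ℝ) + (∑ i, α i) + (∑ i, β i))
          - ((β j : ℕ):ℝ) / ((n:ℝ) + (∑ i, β i)) : ℝ) : ℂ) *
        ∏ i, z i ^ (α i + β i - if i = j then 1 else 0) := by
    rw [tsum_mul_right, tsum_mul_left, ← Complex.ofReal_tsum,
      nat_key n (∑ i, α i) (∑ i, β i) (α j) (β j) hn]
  rw [htsum]
  rcases Nat.eq_zero_or_pos (β j) with hb0 | hb1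
  · simp only [hb0, Nat.cast_zero, zero_div, Complex.ofReal_zero, mul_zero, zero_mul, sub_zero,
      Nat.add_zero]
  · have hZ : (∏ i, z i ^ α i) * ∏ i, z i ^ (β i - if i = j then 1 else 0)
        = ∏ i, z i ^ (α i + β i - if i = j then 1 else 0) := by
      rw [← Finset.prod_mul_distrib]
      refine Finset.prod_congr rfl fun i _ => ?_
      rw [← pow_add]
      congr 1
      rcases eq_or_ne i j with hij | hij
      · rw [hij, if_pos rfl]
        omega
      · rw [if_neg hij]
        omega
    calc a α * b β *
          ((((α j + β j : ℕ) : ℝ) / (n + (∑ i, α i) + (∑ i, β i)) : ℝ) : ℂ) *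
          (∏ i, z i ^ (α i + β i - if i = j then 1 else 0))
        - (a α * ∏ i, z i ^ α i) *
          (b β * ((((β j : ℕ) : ℝ) / (n + ∑ i, β i) : ℝ) : ℂ) *
            ∏ i, z i ^ (β i - if i = j then 1 else 0))
        = a α * b β *
          ((((α j + β j : ℕ) : ℝ) / (n + (∑ i, α i) + (∑ i, β i)) : ℝ) : ℂ) *
          (∏ i, z i ^ (α i + β i - if i = j then 1 else 0))
        - a α * b β * ((((β j : ℕ) : ℝ) / (n + ∑ i, β i) : ℝ) : ℂ) *
          ((∏ i, z i ^ α i) * ∏ i, z i ^ (β i - if i = j then 1 else 0)) := by ring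
      _ = _ := by
          rw [hZ]
          push_cast
          ring
end

section
/- For every non-negative integer t and every analytic function f on 𝔹ₙ with ∫_{𝔹ₙ} |f|² (1−|z|²)^t dm < ∞, one has ∫_{𝔹ₙ} |f(z)|² (1−|z|²)^t dm(z) ≤ 3^{t+1} ∫_{|z|>1/2} |f(z)|² (1−|z|²)^t dm(z), where dm is Lebesgue measure on 𝔹ₙ ⊂ ℂⁿ. -/
open MeasureTheory Metric Real Complex
open scoped ENNReal NNReal

/-- Lebesgue measure on complex n-space with the Euclidean norm, given by the product measure. -/
noncomputable instance euclideanComplexMeasureSpace (n : ℕ) :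
    MeasureTheory.MeasureSpace (EuclideanSpace ℂ (Fin n)) where
  toMeasurableSpace := WithLp.measurableSpace 2 (∀ _ : Fin n, ℂ)
  volume := Measure.map (WithLp.toLp 2) (volume : Measure (∀ _ : Fin n, ℂ))

instance euclideanComplexBorelSpace (n : ℕ) :
    BorelSpace (EuclideanSpace ℂ (Fin n)) :=
  PiLp.borelSpace 2

instance euclideanComplexAddHaar (n : ℕ) :
    Measure.IsAddHaarMeasure (volume : Measure (EuclideanSpace ℂ (Fin n))) :=
  (PiLp.continuousLinearEquiv 2 ℂ (fun _ : Fin n => ℂ)).symm.isAddHaarMeasure_map volume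

lemma kernel_int {L : ℝ} (hL : 1 < L) :
    ∫ θ in (0:ℝ)..(2*π), (L * ‖circleMap 0 L θ - 1‖⁻¹)^2 = 2*π*L^2/(L^2-1) := by
  have hL0 : (0:ℝ) < L := lt_trans one_pos hL
  have hLC : ((L:ℝ):ℂ) ≠ 0 := by exact_mod_cast hL0.ne'
  set h : ℂ → ℂ := fun w => (((L:ℝ):ℂ) * (((L:ℝ):ℂ) - w))⁻¹ with hh
  have hdiff : DifferentiableOn ℂ h (ball (0:ℂ) L) := by
    apply DifferentiableOn.inv
    · exact (((differentiable_const _).sub differentiable_id).const_mul _).differentiableOn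
    · intro w hw
      simp only [mem_ball_zero_iff] at hw
      have h1 : ((L:ℝ):ℂ) - w ≠ 0 := by
        intro hc
        have : w = ((L:ℝ):ℂ) := by linear_combination -hc
        rw [this] at hw
        simp [abs_of_pos hL0] at hw
      exact mul_ne_zero hLC h1
  have hd : DiffContOnCl ℂ h (ball (0:ℂ) 1) :=
    ⟨hdiff.mono (ball_subset_ball hL.le),
     hdiff.continuousOn.mono (by
       rw [closure_ball (0:ℂ) one_ne_zero]
       exact closedBall_subset_ball hL)⟩
  have hw : ((L⁻¹ : ℝ) : ℂ) ∈ ball (0:ℂ) 1 := by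
    simp only [mem_ball_zero_iff, Complex.norm_real]
    rw [Real.norm_eq_abs, abs_of_pos (inv_pos.2 hL0)]
    exact inv_lt_one_of_one_lt₀ hL
  have key := hd.circleIntegral_sub_inv_smul hw
  rw [circleIntegral] at key
  have hpt : ∀ θ : ℝ, deriv (circleMap 0 1) θ •
      ((circleMap 0 1 θ - ((L⁻¹:ℝ):ℂ))⁻¹ • h (circleMap 0 1 θ))
      = (I/((L:ℝ):ℂ)^2) * ((((L * ‖circleMap 0 L θ - 1‖⁻¹)^2 : ℝ)) : ℂ) := by
    intro θ
    set w := circleMap 0 1 θ with hwdef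
    have habs : ‖w‖ = 1 := by simp [hwdef]
    have hw0 : w ≠ 0 := by
      intro hc; rw [hc] at habs; simp at habs
    have hcl : circleMap 0 L θ = ((L:ℝ):ℂ) * w := by
      simp [hwdef, circleMap_zero]
    have h1 : ((L:ℝ):ℂ) * w - 1 ≠ 0 := by
      intro hc
      have : ‖((L:ℝ):ℂ) * w‖ = 1 := by
        rw [show ((L:ℝ):ℂ) * w = 1 by linear_combination hc]; simp
      rw [norm_mul, habs, mul_one, Complex.norm_real, Real.norm_eq_abs, abs_of_pos hL0] at this
      exact hL.ne' this
    have h2 : ((L:ℝ):ℂ) - w ≠ 0 := by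
      intro hc
      have : ‖((L:ℝ):ℂ)‖ = 1 := by
        rw [show ((L:ℝ):ℂ) = w by linear_combination hc, habs]
      rw [Complex.norm_real, Real.norm_eq_abs, abs_of_pos hL0] at this
      exact hL.ne' this
    have h3 : w - ((L⁻¹:ℝ):ℂ) ≠ 0 := by
      intro hc
      have hwe : w = ((L⁻¹:ℝ):ℂ) := by linear_combination hc
      rw [hwe] at habs
      rw [Complex.norm_real, Real.norm_eq_abs, abs_of_pos (inv_pos.2 hL0)] at habs
      exact hL.ne' (inv_eq_one.mp habs)
    have hconj : (starRingEnd ℂ) w = w⁻¹ := (Complex.inv_eq_conj habs).symm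
    have hnrm : ((‖((L:ℝ):ℂ) * w - 1‖ : ℝ) : ℂ)^2
        = (((L:ℝ):ℂ) * w - 1) * (((L:ℝ):ℂ) * w⁻¹ - 1) := by
      rw [← Complex.mul_conj']
      congr 1
      rw [map_sub, map_mul, hconj, Complex.conj_ofReal, map_one]
    have h4 : ((L:ℝ):ℂ) * w⁻¹ - 1 ≠ 0 := by
      rw [show ((L:ℝ):ℂ) * w⁻¹ - 1 = w⁻¹ * (((L:ℝ):ℂ) - w) by field_simp]
      exact mul_ne_zero (inv_ne_zero hw0) h2
    push_cast at h3
    rw [deriv_circleMap, hcl]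
    rw [← hwdef]
    push_cast
    rw [smul_eq_mul, smul_eq_mul]
    rw [mul_pow, inv_pow, hnrm]
    simp only [hh]
    rw [show w - (((L:ℝ):ℂ))⁻¹ = (((L:ℝ):ℂ) * w - 1) / ((L:ℝ):ℂ) by field_simp, inv_div]
    rw [show ((L:ℝ):ℂ) * w⁻¹ - 1 = (((L:ℝ):ℂ) - w)/w by field_simp]
    field_simp
  rw [intervalIntegral.integral_congr (g := fun θ => (I/((L:ℝ):ℂ)^2) *
      ((((L * ‖circleMap 0 L θ - 1‖⁻¹)^2 : ℝ)) : ℂ)) (fun θ _ => hpt θ)] at key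
  rw [intervalIntegral.integral_const_mul, intervalIntegral.integral_ofReal] at key
  set B := ∫ θ in (0:ℝ)..(2*π), (L * ‖circleMap 0 L θ - 1‖⁻¹)^2 with hB
  have hL1 : ((L:ℝ):ℂ)^2 - 1 ≠ 0 := by
    intro hc
    have : ((L^2 - 1 : ℝ):ℂ) = 0 := by push_cast; linear_combination hc
    rw [Complex.ofReal_eq_zero] at this
    nlinarith
  have hhw : h ((L⁻¹:ℝ):ℂ) = (((L:ℝ):ℂ)^2 - 1)⁻¹ := by
    simp only [hh]
    rw [show ((L:ℝ):ℂ) * (((L:ℝ):ℂ) - ((L⁻¹:ℝ):ℂ)) = ((L:ℝ):ℂ)^2 - 1 by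
      push_cast; field_simp]
  rw [hhw, smul_eq_mul] at key
  field_simp at key
  have hkey2 : ((B:ℝ):ℂ) * (((L:ℝ):ℂ)^2 - 1) = 2*((π:ℝ):ℂ)*((L:ℝ):ℂ)^2 := by
    linear_combination key
  have hreal : B * (L^2 - 1) = 2*π*L^2 := by exact_mod_cast hkey2
  have hne : L^2 - 1 ≠ 0 := by nlinarith
  rw [eq_div_iff hne]
  linarith



lemma ptwise {n : ℕ} {f : EuclideanSpace ℂ (Fin n) → ℂ}
    (hf : DifferentiableOn ℂ f (ball (0 : EuclideanSpace ℂ (Fin n)) 1))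
    {L : ℝ} (hL : 1 < L) (z : EuclideanSpace ℂ (Fin n)) (hz : ‖z‖ * L < 1) :
    ‖f z‖^2 * ((L^2 - 1) * (2*π)) ≤
      L^2 * ∫ θ in (0:ℝ)..(2*π), ‖f (circleMap 0 L θ • z)‖^2 := by
  have hπ : (0:ℝ) < π := Real.pi_pos
  have hL0 : (0:ℝ) < L := lt_trans one_pos hL
  have hD : (0:ℝ) < L^2 - 1 := by nlinarith
  -- continuity of the integrand
  have hmem : ∀ θ : ℝ, circleMap 0 L θ • z ∈ ball (0 : EuclideanSpace ℂ (Fin n)) 1 := by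
    intro θ
    rw [mem_ball_zero_iff, norm_smul, norm_circleMap_zero,
      abs_of_pos hL0]
    rw [mul_comm]
    exact hz
  have hv : Continuous fun θ : ℝ => ‖f (circleMap 0 L θ • z)‖ := by
    have hm2 : Continuous fun θ : ℝ => circleMap 0 L θ • z :=
      (continuous_circleMap 0 L).smul continuous_const
    exact (hf.continuousOn.comp_continuous hm2 hmem).norm
  rcases eq_or_ne z 0 with rfl | hz0
  · -- trivial case
    have : ∀ θ : ℝ, circleMap 0 L θ • (0 : EuclideanSpace ℂ (Fin n)) = 0 := fun θ => smul_zero _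
    simp only [this]
    rw [intervalIntegral.integral_const, smul_eq_mul]
    nlinarith [sq_nonneg (‖f 0‖), sq_nonneg (‖f 0‖ * L)]
  · have hzn : (0:ℝ) < ‖z‖ := norm_pos_iff.mpr hz0
    set g : ℂ → ℂ := fun w => f (w • z) with hg
    have hsm : Differentiable ℂ fun w : ℂ => w • z := by
      have : (fun w : ℂ => w • z) = fun w : ℂ =>
          ((ContinuousLinearMap.id ℂ ℂ).smulRight z) w := by
        ext w; simp
      rw [this]
      exact ((ContinuousLinearMap.id ℂ ℂ).smulRight z).differentiable
    have hLz : L < ‖z‖⁻¹ := by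
      rw [← one_div, lt_div_iff₀ hzn]
      linarith [hz]
    have hgd : DifferentiableOn ℂ g (ball (0:ℂ) ‖z‖⁻¹) := by
      apply DifferentiableOn.comp (t := ball (0 : EuclideanSpace ℂ (Fin n)) 1) hf
        hsm.differentiableOn
      intro w hw
      rw [mem_ball_zero_iff] at hw ⊢
      rw [norm_smul]
      calc ‖w‖ * ‖z‖ < ‖z‖⁻¹ * ‖z‖ := by
            exact mul_lt_mul_of_pos_right hw hzn
        _ = 1 := inv_mul_cancel₀ hzn.ne'
    have hdc : DiffContOnCl ℂ g (ball (0:ℂ) L) :=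
      ⟨hgd.mono (ball_subset_ball hLz.le),
       hgd.continuousOn.mono (by
         rw [closure_ball (0:ℂ) hL0.ne']
         exact closedBall_subset_ball hLz)⟩
    have h1mem : (1:ℂ) ∈ ball (0:ℂ) L := by
      simp only [mem_ball_zero_iff, norm_one]; exact hL
    have key := hdc.circleIntegral_sub_inv_smul h1mem
    rw [circleIntegral] at key
    have hnormkey : ‖(2 * (π:ℂ) * I) • g 1‖ = 2*π*‖f z‖ := by
      rw [norm_smul]
      have : g 1 = f z := by rw [hg]; simp
      rw [this]
      simp [Complex.norm_I, abs_of_pos hπ]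
    set u : ℝ → ℝ := fun θ => L * ‖circleMap 0 L θ - 1‖⁻¹ with hu
    set v : ℝ → ℝ := fun θ => ‖f (circleMap 0 L θ • z)‖ with hvdef
    have hcne : ∀ θ : ℝ, circleMap 0 L θ - 1 ≠ 0 := by
      intro θ hc
      have h1 : ‖circleMap 0 L θ‖ = 1 := by
        rw [show circleMap 0 L θ = 1 by linear_combination hc]; simp
      rw [norm_circleMap_zero, abs_of_pos hL0] at h1
      exact hL.ne' h1
    have hptn : ∀ θ : ℝ, ‖deriv (circleMap 0 L) θ •
        ((circleMap 0 L θ - 1)⁻¹ • g (circleMap 0 L θ))‖ = u θ * v θ := by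
      intro θ
      rw [deriv_circleMap, norm_smul, norm_smul, norm_inv]
      have h1 : ‖circleMap 0 L θ * I‖ = L := by
        simp [norm_circleMap_zero, abs_of_pos hL0]
      have h2 : g (circleMap 0 L θ) = f (circleMap 0 L θ • z) := rfl
      rw [h1, h2]
      simp only [hu, hvdef]
      ring
    have hS : 2*π*‖f z‖ ≤ ∫ θ in (0:ℝ)..(2*π), u θ * v θ := by
      calc 2*π*‖f z‖ = ‖(2 * (π:ℂ) * I) • g 1‖ := hnormkey.symm
        _ = ‖∫ θ in (0:ℝ)..(2*π), deriv (circleMap 0 L) θ •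
              ((circleMap 0 L θ - 1)⁻¹ • g (circleMap 0 L θ))‖ := by rw [key]
        _ ≤ ∫ θ in (0:ℝ)..(2*π), ‖deriv (circleMap 0 L) θ •
              ((circleMap 0 L θ - 1)⁻¹ • g (circleMap 0 L θ))‖ :=
            intervalIntegral.norm_integral_le_integral_norm (by linarith)
        _ = ∫ θ in (0:ℝ)..(2*π), u θ * v θ :=
            intervalIntegral.integral_congr (fun θ _ => hptn θ)
    have hucont : Continuous u :=
      continuous_const.mul (((continuous_circleMap 0 L).sub continuous_const).norm.inv₀
        (fun θ => norm_ne_zero_iff.mpr (hcne θ)))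
    set S := ∫ θ in (0:ℝ)..(2*π), u θ * v θ with hSdef
    set V := ∫ θ in (0:ℝ)..(2*π), (v θ)^2 with hVdef
    set B := ∫ θ in (0:ℝ)..(2*π), (u θ)^2 with hBdef
    have hBval : B = 2*π*L^2/(L^2-1) := kernel_int hL
    have hBe : B * (L^2-1) = 2*π*L^2 := by
      rw [hBval]; field_simp
    have hBpos : (0:ℝ) < B := by nlinarith
    have hq0 : (0:ℝ) ≤ ∫ θ in (0:ℝ)..(2*π), (S * u θ - B * v θ)^2 :=
      intervalIntegral.integral_nonneg (by linarith) (fun θ _ => sq_nonneg _)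
    have hiu2 : IntervalIntegrable (fun θ => (u θ)^2) volume 0 (2*π) :=
      (hucont.pow 2).intervalIntegrable 0 (2*π)
    have hiv2 : IntervalIntegrable (fun θ => (v θ)^2) volume 0 (2*π) :=
      (hv.pow 2).intervalIntegrable 0 (2*π)
    have hiuv : IntervalIntegrable (fun θ => u θ * v θ) volume 0 (2*π) :=
      (hucont.mul hv).intervalIntegrable 0 (2*π)
    have hexp : ∫ θ in (0:ℝ)..(2*π), (S * u θ - B * v θ)^2
        = S^2*B - 2*S*B*S + B^2*V := by
      have hfe : (fun θ => (S * u θ - B * v θ)^2)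
          = fun θ => (S^2)*((u θ)^2) - (2*S*B)*(u θ*v θ) + (B^2)*((v θ)^2) :=
        funext fun θ => by ring
      rw [hfe]
      rw [intervalIntegral.integral_add ((hiu2.const_mul _).sub (hiuv.const_mul _))
        (hiv2.const_mul _), intervalIntegral.integral_sub (hiu2.const_mul _)
        (hiuv.const_mul _), intervalIntegral.integral_const_mul,
        intervalIntegral.integral_const_mul, intervalIntegral.integral_const_mul]
      try ring
    have hSV : S^2 ≤ B * V := by nlinarith
    have hSnn : (0:ℝ) ≤ S := le_trans (by positivity) hS
    have hsq : (2*π*‖f z‖)^2 ≤ S^2 := pow_le_pow_left₀ (by positivity) hS 2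
    have hVnn : (0:ℝ) ≤ V := by
      rw [hVdef]
      exact intervalIntegral.integral_nonneg (by linarith) (fun θ _ => sq_nonneg _)
    have h7 : (2*π*‖f z‖)^2 ≤ B * V := hsq.trans hSV
    have h9 : B*(L^2-1)*V = 2*π*L^2*V := by rw [hBe]
    have h8 : (2*π) * (‖f z‖^2*((L^2-1)*(2*π))) ≤ (2*π) * (L^2*V) := by
      nlinarith [mul_le_mul_of_nonneg_right h7 hD.le, h9]
    exact le_of_mul_le_mul_left h8 (by linarith)

lemma rot_homeo {n : ℕ} (u : ℂ) (hu0 : u ≠ 0) :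
    ∃ e : Homeomorph (EuclideanSpace ℂ (Fin n)) (EuclideanSpace ℂ (Fin n)),
      (⇑e = fun z => u • z) ∧
      (∃ le : (EuclideanSpace ℂ (Fin n)) ≃ₗ[ℂ] (EuclideanSpace ℂ (Fin n)), ⇑le = ⇑e) := by
  set le := LinearEquiv.smulOfNeZero ℂ (EuclideanSpace ℂ (Fin n)) u hu0 with hle
  refine ⟨le.toContinuousLinearEquiv.toHomeomorph, ?_, le, rfl⟩
  ext z
  simp [hle, LinearEquiv.smulOfNeZero]
  rfl

lemma rot_mp {n : ℕ} (u : ℂ) (hu : ‖u‖ = 1) :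
    MeasurePreserving (fun z : EuclideanSpace ℂ (Fin n) => u • z) volume volume := by
  have hu0 : u ≠ 0 := by intro h; rw [h] at hu; simp at hu
  obtain ⟨e, he, le, hle⟩ := rot_homeo (n := n) u hu0
  have hmeas : Measurable fun z : EuclideanSpace ℂ (Fin n) => u • z := by
    rw [← he]; exact e.continuous.measurable
  refine ⟨hmeas, ?_⟩
  set ν := Measure.map (fun z : EuclideanSpace ℂ (Fin n) => u • z) volume with hν
  have hmap : ν = Measure.map le volume := by rw [hν, hle, he]
  haveI : Measure.IsAddHaarMeasure ν := by
    rw [hmap]; exact Measure.MapLinearEquiv.isAddHaarMeasure _ le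
  have huniq := Measure.isAddLeftInvariant_eq_smul ν
    (volume : Measure (EuclideanSpace ℂ (Fin n)))
  set c := Measure.addHaarScalarFactor ν (volume : Measure (EuclideanSpace ℂ (Fin n))) with hc
  -- evaluate both sides on the unit ball
  have hball : ν (ball 0 1) = volume (ball (0:EuclideanSpace ℂ (Fin n)) 1) := by
    rw [hν, Measure.map_apply hmeas measurableSet_ball]
    congr 1
    ext z
    simp only [Set.mem_preimage, mem_ball_zero_iff, norm_smul, hu, one_mul]
  have hpos : volume (ball (0:EuclideanSpace ℂ (Fin n)) 1) ≠ 0 :=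
    (measure_ball_pos _ _ one_pos).ne'
  have hfin : volume (ball (0:EuclideanSpace ℂ (Fin n)) 1) ≠ ⊤ :=
    measure_ball_lt_top.ne
  have hc1 : (c : ℝ≥0∞) = 1 := by
    have h2 : (c : ℝ≥0∞) * volume (ball (0:EuclideanSpace ℂ (Fin n)) 1)
        = volume (ball (0:EuclideanSpace ℂ (Fin n)) 1) := by
      conv_rhs => rw [← hball, huniq]
      simp [Measure.smul_apply, smul_eq_mul]
    calc (c:ℝ≥0∞) = (c:ℝ≥0∞) * (volume (ball (0:EuclideanSpace ℂ (Fin n)) 1)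
          * (volume (ball (0:EuclideanSpace ℂ (Fin n)) 1))⁻¹) := by
          rw [ENNReal.mul_inv_cancel hpos hfin, mul_one]
      _ = (volume (ball (0:EuclideanSpace ℂ (Fin n)) 1))
          * (volume (ball (0:EuclideanSpace ℂ (Fin n)) 1))⁻¹ := by
          rw [← mul_assoc, h2]
      _ = 1 := ENNReal.mul_inv_cancel hpos hfin
  have hc1' : c = 1 := by exact_mod_cast hc1
  rw [huniq, hc1', one_smul]

lemma comp_smul_integral {n : ℕ} (u : ℂ) (hu : ‖u‖ = 1) (L : ℝ)
    (h : EuclideanSpace ℂ (Fin n) → ℝ) :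
    ∫ z : EuclideanSpace ℂ (Fin n), h ((((L:ℝ):ℂ) * u) • z)
      = |((L:ℝ) ^ (2*n))⁻¹| • ∫ z : EuclideanSpace ℂ (Fin n), h z := by
  have hu0 : u ≠ 0 := by intro hh; rw [hh] at hu; simp at hu
  have hsp : ∀ z : EuclideanSpace ℂ (Fin n), (((L:ℝ):ℂ) * u) • z = L • (u • z) := by
    intro z
    rw [mul_smul, Complex.coe_smul]
  simp_rw [hsp]
  obtain ⟨e, he, -⟩ := rot_homeo (n := n) u hu0
  have hemb : MeasurableEmbedding (fun z : EuclideanSpace ℂ (Fin n) => u • z) := by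
    rw [← he]; exact e.measurableEmbedding
  have h1 : ∫ z : EuclideanSpace ℂ (Fin n), h (L • (u • z))
      = ∫ w : EuclideanSpace ℂ (Fin n), h (L • w) :=
    (rot_mp u hu).integral_comp hemb (fun w => h (L • w))
  rw [h1, MeasureTheory.Measure.integral_comp_smul volume h L]
  congr 2
  have : Module.finrank ℝ (EuclideanSpace ℂ (Fin n)) = Module.finrank ℝ (∀ _ : Fin n, ℂ) :=
    (LinearEquiv.finrank_eq (WithLp.linearEquiv 2 ℂ _ |>.restrictScalars ℝ))
  rw [this, Module.finrank_pi_fintype, Complex.finrank_real_complex]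
  simp [mul_comm]

lemma per_theta {n : ℕ} {f : EuclideanSpace ℂ (Fin n) → ℂ}
    (hcont : ContinuousOn (fun z => ‖f z‖^2) (ball (0 : EuclideanSpace ℂ (Fin n)) 1))
    {L : ℝ} (hL1 : 1 < L) (hs1 : L/2 < 1) (θ : ℝ) :
    ∫ z in closedBall (0 : EuclideanSpace ℂ (Fin n)) (1/2), ‖f (circleMap 0 L θ • z)‖^2
      ≤ |((L:ℝ)^(2*n))⁻¹| * ∫ z in closedBall (0 : EuclideanSpace ℂ (Fin n)) (L/2), ‖f z‖^2 := by
  have hL0 : (0:ℝ) < L := lt_trans one_pos hL1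
  set gg : EuclideanSpace ℂ (Fin n) → ℝ := fun z => ‖f z‖^2 with hgg
  set Cs := closedBall (0 : EuclideanSpace ℂ (Fin n)) (L/2) with hCs
  set D := closedBall (0 : EuclideanSpace ℂ (Fin n)) (1/2) with hD
  set u : ℂ := Complex.exp (θ * I) with hu
  have hu1 : ‖u‖ = 1 := by
    rw [hu, Complex.norm_exp_ofReal_mul_I]
  set c : ℂ := circleMap 0 L θ with hc
  have hcu : c = ((L:ℝ):ℂ) * u := by rw [hc, circleMap_zero, hu]
  have hnc : ‖c‖ = L := by
    rw [hc, norm_circleMap_zero, abs_of_pos hL0]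
  have hCsB : Cs ⊆ ball (0 : EuclideanSpace ℂ (Fin n)) 1 := closedBall_subset_ball hs1
  set h : EuclideanSpace ℂ (Fin n) → ℝ := Set.indicator Cs gg with hh
  have hmemCs : ∀ z ∈ D, c • z ∈ Cs := by
    intro z hz
    rw [hD, mem_closedBall_zero_iff] at hz
    rw [hCs, mem_closedBall_zero_iff, norm_smul, hnc]
    calc L * ‖z‖ ≤ L * (1/2) := by
          exact mul_le_mul_of_nonneg_left hz hL0.le
      _ = L/2 := by ring
  have heq : ∀ z ∈ D, ‖f (c • z)‖^2 = h (c • z) := by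
    intro z hz
    rw [hh, Set.indicator_of_mem (hmemCs z hz)]
  have hmeasD : MeasurableSet D := measurableSet_closedBall
  have e1 : ∫ z in D, ‖f (c • z)‖^2 = ∫ z in D, h (c • z) :=
    setIntegral_congr_fun hmeasD (fun z hz => heq z hz)
  have hpre : (fun z : EuclideanSpace ℂ (Fin n) => h (c • z))
      = Set.indicator D (fun z => gg (c • z)) := by
    funext z
    by_cases hz : z ∈ D
    · rw [Set.indicator_of_mem hz, hh, Set.indicator_of_mem (hmemCs z hz)]
    · rw [Set.indicator_of_notMem hz, hh, Set.indicator_of_notMem]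
      intro hmem
      apply hz
      rw [hCs, mem_closedBall_zero_iff, norm_smul, hnc] at hmem
      rw [hD, mem_closedBall_zero_iff]
      nlinarith
  have hsmulcont : Continuous fun z : EuclideanSpace ℂ (Fin n) => c • z :=
    continuous_id.const_smul c
  have hmaps : ∀ z ∈ D, c • z ∈ ball (0 : EuclideanSpace ℂ (Fin n)) 1 :=
    fun z hz => hCsB (hmemCs z hz)
  have hint : Integrable (fun z => h (c • z)) volume := by
    rw [hpre, integrable_indicator_iff hmeasD]
    exact ((hcont.comp hsmulcont.continuousOn hmaps).integrableOn_compact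
      (isCompact_closedBall _ _))
  have hnn : 0 ≤ᵐ[volume] fun z : EuclideanSpace ℂ (Fin n) => h (c • z) := by
    apply Filter.Eventually.of_forall
    intro z
    exact Set.indicator_nonneg (fun w _ => by positivity) _
  have e2 : ∫ z in D, h (c • z) ≤ ∫ z, h (c • z) := setIntegral_le_integral hint hnn
  have e3 : ∫ z : EuclideanSpace ℂ (Fin n), h (c • z)
      = |((L:ℝ)^(2*n))⁻¹| * ∫ z : EuclideanSpace ℂ (Fin n), h z := by
    simp_rw [hcu]
    rw [comp_smul_integral u hu1 L h, smul_eq_mul]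
  have e4 : ∫ z : EuclideanSpace ℂ (Fin n), h z = ∫ z in Cs, gg z := by
    rw [hh, integral_indicator measurableSet_closedBall]
  calc ∫ z in D, ‖f (c • z)‖^2 = ∫ z in D, h (c • z) := e1
    _ ≤ ∫ z, h (c • z) := e2
    _ = |((L:ℝ)^(2*n))⁻¹| * ∫ z in Cs, gg z := by rw [e3, e4]

lemma stepC {n : ℕ} (hn : 0 < n) {f : EuclideanSpace ℂ (Fin n) → ℂ}
    (hf : DifferentiableOn ℂ f (ball (0 : EuclideanSpace ℂ (Fin n)) 1))
    {L : ℝ} (hL0 : 0 < L) (hL2 : L^2 = 8/3) :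
    ∫ z in closedBall (0 : EuclideanSpace ℂ (Fin n)) (1/2), ‖f z‖^2
      ≤ (3/5) * ∫ z in closedBall (0 : EuclideanSpace ℂ (Fin n)) (L/2), ‖f z‖^2 := by
  have hπ : (0:ℝ) < π := Real.pi_pos
  have hL1 : 1 < L := by nlinarith
  have hLlt2 : L < 2 := by nlinarith
  have hs1 : L/2 < 1 := by linarith
  set gg : EuclideanSpace ℂ (Fin n) → ℝ := fun z => ‖f z‖^2 with hgg
  set D := closedBall (0 : EuclideanSpace ℂ (Fin n)) (1/2) with hD
  set Cs := closedBall (0 : EuclideanSpace ℂ (Fin n)) (L/2) with hCs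
  set Bl := ball (0 : EuclideanSpace ℂ (Fin n)) 1 with hBl
  have hDB : D ⊆ Bl := closedBall_subset_ball (by norm_num)
  have hcont : ContinuousOn gg Bl := (hf.continuousOn.norm).pow 2
  set F : EuclideanSpace ℂ (Fin n) → ℝ → ℝ :=
    fun z θ => ‖f (circleMap 0 L θ • z)‖^2 with hF
  set ν : Measure ℝ := volume.restrict (Set.Ioc 0 (2*π)) with hν
  set μD : Measure (EuclideanSpace ℂ (Fin n)) := volume.restrict D with hμD
  have hΦ : Continuous fun p : (EuclideanSpace ℂ (Fin n)) × ℝ =>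
      circleMap 0 L p.2 • p.1 := ((continuous_circleMap 0 L).comp continuous_snd).smul
      continuous_fst
  have hmaps : ∀ p ∈ D ×ˢ Set.Icc (0:ℝ) (2*π),
      circleMap 0 L p.2 • p.1 ∈ Bl := by
    rintro ⟨z, θ⟩ ⟨hz, -⟩
    rw [hD, mem_closedBall_zero_iff] at hz
    rw [hBl, mem_ball_zero_iff, norm_smul, norm_circleMap_zero,
      abs_of_pos hL0]
    calc L * ‖z‖ ≤ L * (1/2) := mul_le_mul_of_nonneg_left hz hL0.le
      _ < 1 := by linarith
  have hFcont : ContinuousOn (Function.uncurry F) (D ×ˢ Set.Icc (0:ℝ) (2*π)) :=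
    hcont.comp hΦ.continuousOn hmaps
  have hFint : Integrable (Function.uncurry F) (μD.prod ν) := by
    rw [hμD, hν, Measure.prod_restrict]
    apply IntegrableOn.mono_set _ (Set.prod_mono_right Set.Ioc_subset_Icc_self)
    exact hFcont.integrableOn_compact ((isCompact_closedBall _ _).prod isCompact_Icc)
  have hptz : ∀ z ∈ D, gg z ≤ ((8/5) * (2*π)⁻¹) * ∫ θ, F z θ ∂ν := by
    intro z hz
    rw [hD, mem_closedBall_zero_iff] at hz
    have hzL : ‖z‖ * L < 1 := by nlinarith [norm_nonneg z]
    have hkey := ptwise hf hL1 z hzL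
    rw [hL2] at hkey
    have hIoc : (∫ θ in (0:ℝ)..(2*π), F z θ) = ∫ θ, F z θ ∂ν := by
      rw [hν]
      exact intervalIntegral.integral_of_le (by positivity)
    rw [← hIoc]
    have hkey' : gg z * ((8/3 - 1) * (2*π)) ≤ 8/3 * ∫ θ in (0:ℝ)..(2*π), F z θ := hkey
    have hinv : (2*π) * (2*π)⁻¹ = 1 := mul_inv_cancel₀ (by positivity)
    have hapos : (0:ℝ) < (2*π)⁻¹ := by positivity
    set K := ∫ θ in (0:ℝ)..(2*π), F z θ with hK
    have h2 : gg z * (2*π) ≤ (8/5) * K := by nlinarith [hkey']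
    calc gg z = gg z * ((2*π) * (2*π)⁻¹) := by rw [hinv, mul_one]
      _ = (gg z * (2*π)) * (2*π)⁻¹ := by ring
      _ ≤ ((8/5) * K) * (2*π)⁻¹ := mul_le_mul_of_nonneg_right h2 hapos.le
      _ = 8/5 * (2*π)⁻¹ * K := by ring
  have IntD : IntegrableOn gg D :=
    (hcont.mono hDB).integrableOn_compact (isCompact_closedBall _ _)
  have hXint : Integrable (fun z => ∫ θ, F z θ ∂ν) μD := hFint.integral_prod_left
  have step1 : ∫ z in D, gg z ≤ ∫ z in D, ((8/5) * (2*π)⁻¹) * ∫ θ, F z θ ∂ν :=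
    setIntegral_mono_on IntD (hXint.const_mul _) measurableSet_closedBall hptz
  have step2 : ∫ z in D, ((8/5) * (2*π)⁻¹) * ∫ θ, F z θ ∂ν
      = ((8/5) * (2*π)⁻¹) * ∫ z, (∫ θ, F z θ ∂ν) ∂μD := by
    rw [hμD, integral_const_mul]
  have step3 : ∫ z, (∫ θ, F z θ ∂ν) ∂μD = ∫ θ, (∫ z, F z θ ∂μD) ∂ν :=
    integral_integral_swap hFint
  have hCsnn : (0:ℝ) ≤ ∫ z in Cs, gg z :=
    setIntegral_nonneg measurableSet_closedBall (fun z _ => by positivity)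
  have habs : |((L:ℝ)^(2*n))⁻¹| ≤ 3/8 := by
    have hpow : (8/3:ℝ) ≤ L^(2*n) := by
      calc (8/3:ℝ) = (L^2)^1 := by rw [hL2]; ring
        _ ≤ (L^2)^n := pow_le_pow_right₀ (by nlinarith) hn
        _ = L^(2*n) := by rw [← pow_mul]
    rw [abs_of_pos (by positivity)]
    calc ((L:ℝ)^(2*n))⁻¹ ≤ (8/3:ℝ)⁻¹ := by
          apply inv_anti₀ (by norm_num) hpow
      _ = 3/8 := by norm_num
  have hper : ∀ θ : ℝ, (∫ z, F z θ ∂μD) ≤ (3/8) * ∫ z in Cs, gg z := by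
    intro θ
    calc (∫ z, F z θ ∂μD) = ∫ z in D, F z θ := by rw [hμD]
      _ ≤ |((L:ℝ)^(2*n))⁻¹| * ∫ z in Cs, gg z := per_theta hcont hL1 hs1 θ
      _ ≤ (3/8) * ∫ z in Cs, gg z := mul_le_mul_of_nonneg_right habs hCsnn
  have step4 : ∫ θ, (∫ z, F z θ ∂μD) ∂ν ≤ ∫ θ, ((3/8) * ∫ z in Cs, gg z) ∂ν :=
    integral_mono hFint.integral_prod_right (integrable_const _) hper
  have step5 : ∫ θ, ((3/8) * ∫ z in Cs, gg z) ∂ν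
      = (2*π) * ((3/8) * ∫ z in Cs, gg z) := by
    rw [integral_const, hν, measureReal_def, Measure.restrict_apply_univ, Real.volume_Ioc, smul_eq_mul]
    rw [ENNReal.toReal_ofReal (by linarith)]
    ring_nf
  have hc1 : (0:ℝ) ≤ (8/5) * (2*π)⁻¹ := by positivity
  calc ∫ z in D, gg z ≤ ((8/5) * (2*π)⁻¹) * ∫ z, (∫ θ, F z θ ∂ν) ∂μD := by
        rw [← step2]; exact step1
    _ = ((8/5) * (2*π)⁻¹) * ∫ θ, (∫ z, F z θ ∂μD) ∂ν := by rw [step3]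
    _ ≤ ((8/5) * (2*π)⁻¹) * ((2*π) * ((3/8) * ∫ z in Cs, gg z)) := by
        apply mul_le_mul_of_nonneg_left _ hc1
        rw [← step5]; exact step4
    _ = (3/5) * ∫ z in Cs, gg z := by
        field_simp

theorem weighted_mass_concentrated_near_boundary (n t : ℕ) (hn : 0 < n)
    (f : EuclideanSpace ℂ (Fin n) → ℂ)
    (hf : DifferentiableOn ℂ f (ball (0 : EuclideanSpace ℂ (Fin n)) 1))
    (hint : IntegrableOn (fun z => ‖f z‖ ^ 2 * (1 - ‖z‖ ^ 2) ^ t)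
      (ball (0 : EuclideanSpace ℂ (Fin n)) 1)) :
    ∫ z in ball (0 : EuclideanSpace ℂ (Fin n)) 1, ‖f z‖ ^ 2 * (1 - ‖z‖ ^ 2) ^ t
      ≤ 3 ^ (t + 1) *
        ∫ z in ball (0 : EuclideanSpace ℂ (Fin n)) 1 \ closedBall 0 (1 / 2),
          ‖f z‖ ^ 2 * (1 - ‖z‖ ^ 2) ^ t := by
  set L : ℝ := Real.sqrt (8/3) with hLdef
  have hL2 : L^2 = 8/3 := Real.sq_sqrt (by norm_num)
  have hLnn : 0 ≤ L := Real.sqrt_nonneg _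
  have hL0 : (0:ℝ) < L := by nlinarith
  have hL1 : 1 < L := by nlinarith
  have hLlt2 : L < 2 := by nlinarith
  set W : EuclideanSpace ℂ (Fin n) → ℝ := fun z => ‖f z‖ ^ 2 * (1 - ‖z‖ ^ 2) ^ t with hW
  set gg : EuclideanSpace ℂ (Fin n) → ℝ := fun z => ‖f z‖^2 with hgg
  set D := closedBall (0 : EuclideanSpace ℂ (Fin n)) (1/2) with hD
  set Cs := closedBall (0 : EuclideanSpace ℂ (Fin n)) (L/2) with hCs
  set Bl := ball (0 : EuclideanSpace ℂ (Fin n)) 1 with hBl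
  set A' := Cs \ D with hA'
  set Ann := Bl \ D with hAnn
  have hDB : D ⊆ Bl := closedBall_subset_ball (by norm_num)
  have hDCs : D ⊆ Cs := closedBall_subset_closedBall (by linarith)
  have hCsB : Cs ⊆ Bl := closedBall_subset_ball (by linarith)
  have hA'B : A' ⊆ Bl := Set.diff_subset.trans hCsB
  have hA'Ann : A' ⊆ Ann := fun z hz => ⟨hCsB hz.1, hz.2⟩
  have hmeasD : MeasurableSet D := measurableSet_closedBall
  have hmeasCs : MeasurableSet Cs := measurableSet_closedBall
  have hmeasBl : MeasurableSet Bl := measurableSet_ball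
  have hmeasA' : MeasurableSet A' := hmeasCs.diff hmeasD
  have hmeasAnn : MeasurableSet Ann := hmeasBl.diff hmeasD
  have hcont : ContinuousOn gg Bl := (hf.continuousOn.norm).pow 2
  -- integrability
  have IntCs : IntegrableOn gg Cs :=
    (hcont.mono hCsB).integrableOn_compact (isCompact_closedBall _ _)
  have IntD : IntegrableOn gg D := IntCs.mono_set hDCs
  have IntA' : IntegrableOn gg A' := IntCs.mono_set Set.diff_subset
  have IntWD : IntegrableOn W D := hint.mono_set hDB
  have IntWAnn : IntegrableOn W Ann := hint.mono_set Set.diff_subset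
  have IntWA' : IntegrableOn W A' := IntWAnn.mono_set hA'Ann
  -- nonnegativity of W on the ball
  have hWnn : ∀ z ∈ Bl, 0 ≤ W z := by
    intro z hz
    rw [hBl, mem_ball_zero_iff] at hz
    have h1 : (0:ℝ) ≤ 1 - ‖z‖^2 := by nlinarith [norm_nonneg z]
    positivity
  -- splitting
  have split1 : ∫ z in Bl, W z = (∫ z in D, W z) + ∫ z in Ann, W z := by
    rw [← setIntegral_union (Set.disjoint_sdiff_right) hmeasAnn IntWD IntWAnn,
      Set.union_diff_cancel hDB]
  have split2 : ∫ z in Cs, gg z = (∫ z in D, gg z) + ∫ z in A', gg z := by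
    rw [← setIntegral_union (Set.disjoint_sdiff_right) hmeasA' IntD IntA',
      Set.union_diff_cancel hDCs]
  -- step 2 : ∫_D W ≤ ∫_D gg
  have step2 : ∫ z in D, W z ≤ ∫ z in D, gg z := by
    apply setIntegral_mono_on IntWD IntD hmeasD
    intro z hz
    rw [hD, mem_closedBall_zero_iff] at hz
    have h1 : (1 - ‖z‖^2)^t ≤ 1 :=
      pow_le_one₀ (by nlinarith [norm_nonneg z]) (by nlinarith [norm_nonneg z])
    have h2 : (0:ℝ) ≤ ‖f z‖^2 := by positivity
    calc W z = ‖f z‖^2 * (1 - ‖z‖^2)^t := rfl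
      _ ≤ ‖f z‖^2 * 1 := mul_le_mul_of_nonneg_left h1 h2
      _ = gg z := by rw [mul_one]
  -- step C and consequence
  have hC := stepC hn hf hL0 hL2
  have hG2nn : 0 ≤ ∫ z in A', gg z :=
    setIntegral_nonneg hmeasA' (fun z _ => by positivity)
  have step3 : ∫ z in D, gg z ≤ (3/2) * ∫ z in A', gg z := by
    have := hC
    rw [split2] at this
    linarith
  -- step 4 : ∫_A' gg ≤ 3^t ∫_A' W
  have step4 : ∫ z in A', gg z ≤ (3:ℝ)^t * ∫ z in A', W z := by
    have hconst : IntegrableOn (fun z => (3:ℝ)^t * W z) A' := IntWA'.const_mul _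
    calc ∫ z in A', gg z ≤ ∫ z in A', (3:ℝ)^t * W z := by
          apply setIntegral_mono_on IntA' hconst hmeasA'
          intro z hz
          have hzs : ‖z‖ ≤ L/2 := by
            have := hz.1
            rwa [hCs, mem_closedBall_zero_iff] at this
          have hz2 : ‖z‖^2 ≤ 2/3 := by nlinarith [norm_nonneg z]
          have hkey : (1:ℝ) ≤ 3^t * (1 - ‖z‖^2)^t := by
            rw [← mul_pow]
            apply one_le_pow₀
            nlinarith
          have h2 : (0:ℝ) ≤ ‖f z‖^2 := by positivity
          calc gg z = ‖f z‖^2 * 1 := by rw [mul_one]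
            _ ≤ ‖f z‖^2 * (3^t * (1 - ‖z‖^2)^t) := mul_le_mul_of_nonneg_left hkey h2
            _ = (3:ℝ)^t * W z := by ring
      _ = (3:ℝ)^t * ∫ z in A', W z := integral_const_mul _ _
  -- step 5 : ∫_A' W ≤ ∫_Ann W
  have step5 : ∫ z in A', W z ≤ ∫ z in Ann, W z := by
    apply setIntegral_mono_set IntWAnn
    · apply (ae_restrict_mem hmeasAnn).mono
      intro z hz
      exact hWnn z hz.1
    · exact HasSubset.Subset.eventuallyLE hA'Ann
  -- final arithmetic
  have hYnn : 0 ≤ ∫ z in Ann, W z :=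
    setIntegral_nonneg hmeasAnn (fun z hz => hWnn z hz.1)
  have h3t : (1:ℝ) ≤ 3^t := one_le_pow₀ (by norm_num)
  have hXle : ∫ z in D, W z ≤ (3/2) * ((3:ℝ)^t * ∫ z in Ann, W z) := by
    calc ∫ z in D, W z ≤ ∫ z in D, gg z := step2
      _ ≤ (3/2) * ∫ z in A', gg z := step3
      _ ≤ (3/2) * ((3:ℝ)^t * ∫ z in A', W z) := by
          apply mul_le_mul_of_nonneg_left step4 (by norm_num)
      _ ≤ (3/2) * ((3:ℝ)^t * ∫ z in Ann, W z) := by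
          apply mul_le_mul_of_nonneg_left _ (by norm_num)
          exact mul_le_mul_of_nonneg_left step5 (by positivity)
  have hpow : (3:ℝ)^(t+1) = 3 * 3^t := by rw [pow_succ]; ring
  calc ∫ z in Bl, W z = (∫ z in D, W z) + ∫ z in Ann, W z := split1
    _ ≤ (3/2) * ((3:ℝ)^t * ∫ z in Ann, W z) + ∫ z in Ann, W z := by linarith
    _ ≤ (3:ℝ)^(t+1) * ∫ z in Ann, W z := by
        rw [hpow]
        nlinarith [mul_le_mul_of_nonneg_right h3t hYnn]
end

section
/- Let p be a one-variable polynomial of degree at most m, let 1 ≤ l ≤ m, and let f be an entire function on ℂ. Then |p^{(l)}(0) f(0)| ≤ (m!/(m−l)!) ∫_𝕋 |p f| dθ/(2π), where the integral is over the unit circle with normalized arc-length measure. -/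
open MeasureTheory

noncomputable def Complex.abs : AbsoluteValue ℂ ℝ where
  toFun := fun z => ‖z‖
  map_mul' := norm_mul
  nonneg' := norm_nonneg
  eq_zero' := fun _ => norm_eq_zero
  add_le' := norm_add_le

lemma Complex.abs_apply (z : ℂ) : Complex.abs z = ‖z‖ := rfl

lemma Complex.abs_ofReal (x : ℝ) : Complex.abs x = |x| := by
  rw [Complex.abs_apply, Complex.norm_real, Real.norm_eq_abs]

lemma Complex.abs_natCast (n : ℕ) : Complex.abs n = n := by
  rw [Complex.abs_apply, Complex.norm_natCast]

lemma Complex.abs_conj (z : ℂ) : Complex.abs ((starRingEnd ℂ) z) = Complex.abs z := by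
  rw [Complex.abs_apply, Complex.abs_apply, Complex.norm_conj]

open Polynomial in
private lemma aux_mean_value (h : ℂ → ℂ) (hh : Differentiable ℂ h) :
    Complex.abs (h 0) ≤ (2 * Real.pi)⁻¹ *
      ∫ θ in (0 : ℝ)..2 * Real.pi, Complex.abs (h (Complex.exp (θ * Complex.I))) := by
  have h1 : (∮ z in C(0, 1), (z - 0)⁻¹ • h z) = (2 * Real.pi * Complex.I : ℂ) • h 0 :=
    (hh.differentiableOn).circleIntegral_sub_inv_smul (by simp)
  rw [circleIntegral] at h1
  have h2 : ∀ θ : ℝ, deriv (circleMap 0 1) θ •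
      ((circleMap 0 1 θ - 0)⁻¹ • h (circleMap 0 1 θ))
      = Complex.I * h (Complex.exp (θ * Complex.I)) := by
    intro θ
    have hne : circleMap 0 1 θ ≠ 0 := circleMap_ne_center one_ne_zero
    have : circleMap 0 1 θ = Complex.exp (θ * Complex.I) := by simp [circleMap]
    rw [deriv_circleMap]
    field_simp [smul_eq_mul, this]
    simp only [smul_eq_mul, sub_zero, one_div]
    rw [mul_comm Complex.I (θ:ℂ), ← this, mul_comm _ Complex.I, mul_assoc, mul_inv_cancel_left₀ hne]
  simp only [h2] at h1
  rw [intervalIntegral.integral_const_mul] at h1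
  have h3 : (∫ θ in (0 : ℝ)..2 * Real.pi, h (Complex.exp (θ * Complex.I)))
      = (2 * Real.pi : ℂ) * h 0 := by
    have hI : (Complex.I : ℂ) ≠ 0 := Complex.I_ne_zero
    apply mul_left_cancel₀ hI
    rw [h1, smul_eq_mul]; ring
  have h4 : Complex.abs (h 0) = (2 * Real.pi)⁻¹ *
      Complex.abs (∫ θ in (0 : ℝ)..2 * Real.pi, h (Complex.exp (θ * Complex.I))) := by
    rw [h3]
    rw [map_mul]
    have h5 : (2 * (Real.pi : ℂ)) = ((2 * Real.pi : ℝ) : ℂ) := by push_cast; ring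
    rw [h5, Complex.abs_ofReal, abs_of_nonneg (by positivity), ← mul_assoc,
      inv_mul_cancel₀ (by positivity), one_mul]
  rw [h4]
  refine mul_le_mul_of_nonneg_left ?_ (by positivity)
  calc Complex.abs (∫ θ in (0 : ℝ)..2 * Real.pi, h (Complex.exp (θ * Complex.I)))
      = ‖∫ θ in (0 : ℝ)..2 * Real.pi, h (Complex.exp (θ * Complex.I))‖ := rfl
    _ ≤ ∫ θ in (0 : ℝ)..2 * Real.pi, ‖h (Complex.exp (θ * Complex.I))‖ :=
        intervalIntegral.norm_integral_le_integral_norm (by positivity)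

open Polynomial in
private lemma aux_iter_deriv (r : ℂ) (q : Polynomial ℂ) (l : ℕ) :
    derivative^[l + 1] ((X - C r) * q)
      = (X - C r) * derivative^[l + 1] q + (l + 1 : ℕ) • derivative^[l] q := by
  induction l with
  | zero =>
    simp only [zero_add, Function.iterate_one, Function.iterate_zero, id_eq, one_nsmul,
      derivative_mul, derivative_sub, derivative_X, derivative_C, sub_zero, one_mul]
    abel
  | succ n ih =>
    rw [Function.iterate_succ_apply', ih]
    simp only [Function.iterate_succ_apply', map_add, derivative_mul, map_nsmul,
      derivative_sub, derivative_X, derivative_C, sub_zero, one_mul]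
    simp only [nsmul_eq_mul]
    push_cast
    ring

open Polynomial in
private lemma aux_main : ∀ m l : ℕ, l ≤ m → ∀ p : Polynomial ℂ, p.natDegree ≤ m →
    ∀ f : ℂ → ℂ, Differentiable ℂ f →
    Complex.abs ((Polynomial.derivative^[l] p).eval 0 * f 0)
      ≤ ((m.factorial : ℝ) / (m - l).factorial) *
        ((2 * Real.pi)⁻¹ * ∫ θ in (0 : ℝ)..2 * Real.pi,
          Complex.abs (p.eval (Complex.exp (θ * Complex.I)) *
            f (Complex.exp (θ * Complex.I)))) := by
  intro m
  induction m with
  | zero =>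
    intro l hl p hp f hf
    interval_cases l
    simp only [Function.iterate_zero, id_eq, Nat.sub_zero, Nat.factorial_zero, Nat.cast_one,
      div_self (one_ne_zero), one_mul]
    exact aux_mean_value (fun z => p.eval z * f z) ((p.differentiable).mul hf)
  | succ M ih =>
    intro l hl p hp f hf
    match l with
    | 0 =>
      simp only [Function.iterate_zero, id_eq, Nat.sub_zero]
      rw [div_self (by positivity), one_mul]
      exact aux_mean_value (fun z => p.eval z * f z) ((p.differentiable).mul hf)
    | (l' + 1) =>
      have hint_nonneg : (0:ℝ) ≤ (2 * Real.pi)⁻¹ * ∫ θ in (0 : ℝ)..2 * Real.pi,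
          Complex.abs (p.eval (Complex.exp (θ * Complex.I)) *
            f (Complex.exp (θ * Complex.I))) := by
        apply mul_nonneg (by positivity)
        apply intervalIntegral.integral_nonneg (by positivity)
        intro x _; positivity
      by_cases hdeg : p.natDegree = 0
      · have hz : derivative^[l' + 1] p = 0 :=
          iterate_derivative_eq_zero (by omega)
        rw [hz]
        simp only [eval_zero, zero_mul, map_zero]
        positivity
      · -- p has a root
        have hdegpos : 0 < p.degree := natDegree_pos_iff_degree_pos.mp (Nat.pos_of_ne_zero hdeg)
        obtain ⟨r, hr⟩ := Complex.exists_root hdegpos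
        obtain ⟨q, hq⟩ := dvd_iff_isRoot.mpr hr
        have hp0 : p ≠ 0 := fun h => by simp [h] at hdeg
        have hq0 : q ≠ 0 := fun h => by rw [h, mul_zero] at hq; exact hp0 hq
        have hXC : (X - C r : Polynomial ℂ) ≠ 0 := X_sub_C_ne_zero r
        have hqdeg : q.natDegree ≤ M := by
          have := natDegree_mul hXC hq0
          rw [← hq, natDegree_X_sub_C] at this
          omega
        set A : ℂ := (derivative^[l' + 1] q).eval 0 with hA
        set B : ℂ := (derivative^[l'] q).eval 0 with hB
        have heval : (derivative^[l' + 1] p).eval 0 = (-r) * A + ((l' : ℂ) + 1) * B := by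
          rw [hq, aux_iter_deriv, nsmul_eq_mul]
          simp only [eval_add, eval_mul, eval_sub, eval_X, eval_C, eval_natCast]
          push_cast
          ring
        -- choose the weight w
        obtain ⟨w, hw1, hw2, hw0⟩ : ∃ w : ℂ → ℂ, Differentiable ℂ w ∧
            (∀ θ : ℝ, Complex.abs (w (Complex.exp (θ * Complex.I)))
              = Complex.abs (Complex.exp (θ * Complex.I) - r)) ∧
            Complex.abs (w 0) = max 1 (Complex.abs r) := by
          by_cases hrr : 1 ≤ Complex.abs r
          · refine ⟨fun z => z - r, (differentiable_id).sub_const r, fun θ => rfl, ?_⟩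
            simp only [zero_sub, map_neg_eq_map]
            exact (max_eq_right hrr).symm
          · refine ⟨fun z => 1 - (starRingEnd ℂ) r * z,
              (differentiable_const 1).sub ((differentiable_const _).mul differentiable_id), ?_, ?_⟩
            · intro θ
              set z := Complex.exp (θ * Complex.I) with hzdef
              have hz1 : Complex.abs z = 1 := Complex.norm_exp_ofReal_mul_I θ
              have hzz : z * (starRingEnd ℂ) z = 1 := by
                rw [Complex.mul_conj]
                norm_cast
                rw [Complex.normSq_eq_norm_sq, ← Complex.abs_apply, hz1]
                norm_num
              have hkey : 1 - (starRingEnd ℂ) r * z = z * ((starRingEnd ℂ) (z - r)) := by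
                rw [map_sub, mul_sub, hzz]; ring
              show Complex.abs (1 - (starRingEnd ℂ) r * z) = Complex.abs (z - r)
              rw [hkey, map_mul, hz1, one_mul, Complex.abs_conj]
            · simp only [mul_zero, sub_zero, map_one]
              exact (max_eq_left (le_of_not_ge hrr)).symm
        set g : ℂ → ℂ := fun z => w z * f z with hg
        have hgd : Differentiable ℂ g := hw1.mul hf
        have hg0 : Complex.abs (g 0) = max 1 (Complex.abs r) * Complex.abs (f 0) := by
          rw [hg]; simp only [map_mul, hw0]
        have hint_eq : (∫ θ in (0 : ℝ)..2 * Real.pi,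
            Complex.abs (q.eval (Complex.exp (θ * Complex.I)) *
              g (Complex.exp (θ * Complex.I))))
            = ∫ θ in (0 : ℝ)..2 * Real.pi,
              Complex.abs (p.eval (Complex.exp (θ * Complex.I)) *
                f (Complex.exp (θ * Complex.I))) := by
          apply intervalIntegral.integral_congr
          intro θ _
          simp only [hg, hq, eval_mul, eval_sub, eval_X, eval_C, map_mul, hw2 θ]
          ring
        set I2 : ℝ := (2 * Real.pi)⁻¹ * ∫ θ in (0 : ℝ)..2 * Real.pi,
          Complex.abs (p.eval (Complex.exp (θ * Complex.I)) *
            f (Complex.exp (θ * Complex.I))) with hI2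
        have hBbound : Complex.abs (B * g 0)
            ≤ ((M.factorial : ℝ) / (M - l').factorial) * I2 := by
          have := ih l' (by omega) q hqdeg g hgd
          rwa [hint_eq] at this
        have hfB : Complex.abs (B * f 0) ≤ Complex.abs (B * g 0) := by
          rw [map_mul, map_mul, hg0]
          have h1 : Complex.abs (f 0) ≤ max 1 (Complex.abs r) * Complex.abs (f 0) := by
            nlinarith [le_max_left 1 (Complex.abs r), AbsoluteValue.nonneg Complex.abs (f 0)]
          nlinarith [AbsoluteValue.nonneg Complex.abs B]
        have hfA : Complex.abs (r * A * f 0) ≤ Complex.abs (A * g 0) := by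
          rw [map_mul, map_mul, map_mul, hg0]
          calc Complex.abs r * Complex.abs A * Complex.abs (f 0)
              ≤ max 1 (Complex.abs r) * Complex.abs A * Complex.abs (f 0) :=
                mul_le_mul_of_nonneg_right (mul_le_mul_of_nonneg_right (le_max_right 1 _)
                  (AbsoluteValue.nonneg _ _)) (AbsoluteValue.nonneg _ _)
            _ = Complex.abs A * (max 1 (Complex.abs r) * Complex.abs (f 0)) := by ring
        have hsplit : Complex.abs ((derivative^[l' + 1] p).eval 0 * f 0)
            ≤ Complex.abs (A * g 0) + ((l' : ℝ) + 1) * Complex.abs (B * g 0) := by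
          rw [heval]
          calc Complex.abs (((-r) * A + ((l' : ℂ) + 1) * B) * f 0)
              = Complex.abs ((-r * A * f 0) + (((l' : ℂ) + 1) * (B * f 0))) := by ring_nf
            _ ≤ Complex.abs (-r * A * f 0) + Complex.abs (((l' : ℂ) + 1) * (B * f 0)) :=
                AbsoluteValue.add_le _ _ _
            _ = Complex.abs (r * A * f 0) + ((l' : ℝ) + 1) * Complex.abs (B * f 0) := by
                have hc : Complex.abs (((l' : ℂ) + 1) * (B * f 0))
                    = ((l' : ℝ) + 1) * Complex.abs (B * f 0) := by
                  rw [map_mul]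
                  congr 1
                  rw [show ((l' : ℂ) + 1) = ((l' + 1 : ℕ) : ℂ) by push_cast; ring,
                    Complex.abs_natCast]
                  push_cast; ring
                rw [neg_mul, neg_mul, map_neg_eq_map, hc]
            _ ≤ Complex.abs (A * g 0) + ((l' : ℝ) + 1) * Complex.abs (B * f 0) := by
                gcongr
            _ ≤ Complex.abs (A * g 0) + ((l' : ℝ) + 1) * Complex.abs (B * g 0) := by
                gcongr
        by_cases hlM : l' + 1 ≤ M
        · have hAbound : Complex.abs (A * g 0)
              ≤ ((M.factorial : ℝ) / (M - (l' + 1)).factorial) * I2 := by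
            have := ih (l' + 1) hlM q hqdeg g hgd
            rwa [hint_eq] at this
          have harith : ((M.factorial : ℝ) / (M - (l' + 1)).factorial)
              + ((l' : ℝ) + 1) * ((M.factorial : ℝ) / (M - l').factorial)
              = ((M + 1).factorial : ℝ) / ((M + 1) - (l' + 1)).factorial := by
            obtain ⟨a, ha⟩ : ∃ a, M = a + (l' + 1) := ⟨M - (l' + 1), by omega⟩
            subst ha
            have h1 : a + (l' + 1) - (l' + 1) = a := by omega
            have h2 : a + (l' + 1) - l' = a + 1 := by omega
            have h3 : a + (l' + 1) + 1 - (l' + 1) = a + 1 := by omega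
            rw [h1, h2, h3, Nat.factorial_succ (a + (l' + 1)), Nat.factorial_succ a]
            have ha0 : ((a.factorial : ℝ)) ≠ 0 := by positivity
            have ha1 : ((a : ℝ) + 1) ≠ 0 := by positivity
            push_cast
            field_simp
            ring
          calc Complex.abs ((derivative^[l' + 1] p).eval 0 * f 0)
              ≤ Complex.abs (A * g 0) + ((l' : ℝ) + 1) * Complex.abs (B * g 0) := hsplit
            _ ≤ ((M.factorial : ℝ) / (M - (l' + 1)).factorial) * I2
                + ((l' : ℝ) + 1) * (((M.factorial : ℝ) / (M - l').factorial) * I2) := by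
                gcongr
            _ = (((M.factorial : ℝ) / (M - (l' + 1)).factorial)
                + ((l' : ℝ) + 1) * ((M.factorial : ℝ) / (M - l').factorial)) * I2 := by ring
            _ = (((M + 1).factorial : ℝ) / ((M + 1) - (l' + 1)).factorial) * I2 := by
                rw [harith]
        · -- l' + 1 = M + 1, i.e. l' = M
          have hl'M : l' = M := by omega
          subst hl'M
          have hAzero : A = 0 := by
            rw [hA, iterate_derivative_eq_zero (by omega), eval_zero]
          have harith2 : (((l' + 1).factorial : ℝ)) / ((((l' + 1)) - (l' + 1)).factorial)
              = ((l' : ℝ) + 1) * ((l'.factorial : ℝ) / ((l' - l').factorial)) := by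
            rw [Nat.sub_self, Nat.sub_self, Nat.factorial_zero, Nat.factorial_succ]
            push_cast
            ring
          calc Complex.abs ((derivative^[l' + 1] p).eval 0 * f 0)
              ≤ Complex.abs (A * g 0) + ((l' : ℝ) + 1) * Complex.abs (B * g 0) := hsplit
            _ = ((l' : ℝ) + 1) * Complex.abs (B * g 0) := by
                rw [hAzero, zero_mul, map_zero, zero_add]
            _ ≤ ((l' : ℝ) + 1) * (((l'.factorial : ℝ) / ((l' - l').factorial)) * I2) := by
                gcongr
            _ = ((((l' + 1)).factorial : ℝ) / ((((l' + 1)) - (l' + 1)).factorial)) * I2 := by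
                rw [harith2]; ring

theorem derivative_at_zero_circle_estimate (m l : ℕ) (hl : 1 ≤ l) (hlm : l ≤ m)
    (p : Polynomial ℂ) (hp : p.natDegree ≤ m) (f : ℂ → ℂ) (hf : Differentiable ℂ f) :
    ‖(Polynomial.derivative^[l] p).eval 0 * f 0‖
      ≤ ((m.factorial : ℝ) / (m - l).factorial) *
        ((2 * Real.pi)⁻¹ * ∫ θ in (0 : ℝ)..2 * Real.pi,
          ‖p.eval (Complex.exp (θ * Complex.I)) *
            f (Complex.exp (θ * Complex.I))‖) :=
  aux_main m l hlm p hp f hf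
end

section
/- Let p be a one-variable polynomial of degree at most m, let 1 ≤ l ≤ m, r > 0, and let f be an entire function on ℂ. Then r^l |p^{(l)}(0) f(0)| ≤ ((l+2) m! / (2 (m−l)!)) ∫_{rD} |p f| dm(z)/(π r²), where rD is the disk of radius r and dm is Lebesgue measure. -/
open MeasureTheory Metric Real Polynomial

private lemma ms_prod_map_le {α : Type*} (S : Multiset α) (f g : α → ℝ)
    (h0 : ∀ x ∈ S, 0 ≤ f x) (h : ∀ x ∈ S, f x ≤ g x) :
    (S.map f).prod ≤ (S.map g).prod := by
  induction S using Multiset.induction_on with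
  | empty => simp
  | cons a S ih =>
    simp only [Multiset.map_cons, Multiset.prod_cons]
    have hfS : (0:ℝ) ≤ (S.map f).prod :=
      Multiset.prod_nonneg (by
        intro x hx
        obtain ⟨y, hy, rfl⟩ := Multiset.mem_map.1 hx
        exact h0 y (Multiset.mem_cons_of_mem hy))
    have hga : (0:ℝ) ≤ g a := le_trans (h0 a (Multiset.mem_cons_self a S)) (h a (Multiset.mem_cons_self a S))
    exact mul_le_mul (h a (Multiset.mem_cons_self a S))
      (ih (fun x hx => h0 x (Multiset.mem_cons_of_mem hx))
          (fun x hx => h x (Multiset.mem_cons_of_mem hx))) hfS hga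

private lemma norm_ms_prod (S : Multiset ℂ) :
    ‖S.prod‖ = (S.map (fun x => ‖x‖)).prod :=
  map_multiset_prod (normHom (α := ℂ)) S

private lemma ms_pow_card_le (S : Multiset ℝ) (s : ℝ) (hs : 0 ≤ s)
    (h : ∀ x ∈ S, s ≤ x) : s ^ Multiset.card S ≤ S.prod := by
  induction S using Multiset.induction_on with
  | empty => simp
  | cons a S ih =>
    simp only [Multiset.card_cons, Multiset.prod_cons, pow_succ]
    rw [mul_comm (s ^ Multiset.card S) s]
    exact mul_le_mul (h a (Multiset.mem_cons_self a S))
      (ih (fun x hx => h x (Multiset.mem_cons_of_mem hx)))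
      (pow_nonneg hs _) (le_trans hs (h a (Multiset.mem_cons_self a S)))

theorem coeff_bound (m l : ℕ) (hlm : l ≤ m) (s : ℝ) (hs : 0 < s)
    (p : Polynomial ℂ) (hp : p.natDegree ≤ m) :
    ‖p.coeff l‖ * s ^ l ≤
      (m.choose l : ℝ) * (‖p.leadingCoeff‖ *
        ((p.roots.map (fun w => max (‖w‖) s)).prod)) := by
  set d := p.natDegree with hd
  have hMnn : (0:ℝ) ≤ (p.roots.map (fun w => max (‖w‖) s)).prod := by
    apply Multiset.prod_nonneg
    intro x hx
    obtain ⟨w, -, rfl⟩ := Multiset.mem_map.1 hx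
    exact le_trans hs.le (le_max_right _ _)
  by_cases hld : d < l
  · have : p.coeff l = 0 := p.coeff_eq_zero_of_natDegree_lt hld
    rw [this]
    simp only [norm_zero, zero_mul]
    positivity
  push_neg at hld
  have hsplit : p.Splits := IsAlgClosed.splits p
  have hcard : Multiset.card p.roots = d := (splits_iff_card_roots).1 hsplit
  rw [Polynomial.coeff_eq_esymm_roots_of_splits hsplit hld]
  rw [norm_mul, norm_mul, norm_pow, norm_neg, norm_one, one_pow, mul_one]
  -- bound each subset product
  have hsub : ∀ S ∈ p.roots.powersetCard (d - l),
      ‖S.prod‖ * s ^ l ≤ (p.roots.map (fun w => max (‖w‖) s)).prod := by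
    intro S hS
    obtain ⟨hSle, hScard⟩ := (Multiset.mem_powersetCard).1 hS
    have habs : ‖S.prod‖ = (S.map (fun x => ‖x‖)).prod := by
      exact (norm_ms_prod S)
    have h1 : (S.map (fun x => ‖x‖)).prod ≤ (S.map (fun w => max (‖w‖) s)).prod :=
      ms_prod_map_le S _ _ (fun x _ => (norm_nonneg x)) (fun x _ => le_max_left _ _)
    have hsplitset : p.roots = S + (p.roots - S) := by
      rw [add_comm]; exact (tsub_add_cancel_of_le hSle).symm
    have h2 : s ^ l ≤ ((p.roots - S).map (fun w => max (‖w‖) s)).prod := by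
      have hcard2 : Multiset.card ((p.roots - S).map (fun w => max (‖w‖) s)) = l := by
        rw [Multiset.card_map, Multiset.card_sub hSle, hcard, hScard]
        omega
      rw [← hcard2]
      apply ms_pow_card_le _ _ hs.le
      intro x hx
      obtain ⟨w, -, rfl⟩ := Multiset.mem_map.1 hx
      exact le_max_right _ _
    calc ‖S.prod‖ * s ^ l
        ≤ (S.map (fun w => max (‖w‖) s)).prod *
            ((p.roots - S).map (fun w => max (‖w‖) s)).prod := by
          apply mul_le_mul (habs ▸ h1) h2 (by positivity)
          exact Multiset.prod_nonneg (by
            intro x hx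
            obtain ⟨w, -, rfl⟩ := Multiset.mem_map.1 hx
            exact le_trans hs.le (le_max_right _ _))
      _ = (p.roots.map (fun w => max (‖w‖) s)).prod := by
          conv_rhs => rw [hsplitset]
          rw [Multiset.map_add, Multiset.prod_add]
  -- esymm bound
  have hesymm : ‖p.roots.esymm (d - l)‖ * s ^ l ≤
      (m.choose l : ℝ) * (p.roots.map (fun w => max (‖w‖) s)).prod := by
    rw [Multiset.esymm]
    have h1 : ‖((p.roots.powersetCard (d - l)).map Multiset.prod).sum‖
        ≤ (((p.roots.powersetCard (d - l)).map Multiset.prod).map (fun x => ‖x‖)).sum := by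
      simpa using
        norm_multiset_sum_le ((p.roots.powersetCard (d - l)).map Multiset.prod)
    calc ‖((p.roots.powersetCard (d - l)).map Multiset.prod).sum‖ * s ^ l
        ≤ (((p.roots.powersetCard (d - l)).map Multiset.prod).map (fun x => ‖x‖)).sum * s ^ l :=
          mul_le_mul_of_nonneg_right h1 (by positivity)
      _ = ((p.roots.powersetCard (d - l)).map
            (fun S => ‖S.prod‖ * s ^ l)).sum := by
          rw [Multiset.map_map, ← Multiset.sum_map_mul_right]; rfl
      _ ≤ Multiset.card (p.roots.powersetCard (d - l)) •
            (p.roots.map (fun w => max (‖w‖) s)).prod := by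
          rw [← Multiset.card_map (fun S => ‖S.prod‖ * s ^ l)]
          apply Multiset.sum_le_card_nsmul
          intro x hx
          obtain ⟨S, hS, rfl⟩ := Multiset.mem_map.1 hx
          simpa using hsub S hS
      _ ≤ (m.choose l : ℝ) * (p.roots.map (fun w => max (‖w‖) s)).prod := by
          rw [nsmul_eq_mul]
          apply mul_le_mul_of_nonneg_right _ hMnn
          rw [Multiset.card_powersetCard, hcard, Nat.choose_symm hld]
          exact_mod_cast Nat.choose_le_choose l hp
  calc ‖p.leadingCoeff‖ * ‖p.roots.esymm (p.natDegree - l)‖ * s ^ l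
      = ‖p.leadingCoeff‖ * (‖p.roots.esymm (d - l)‖ * s ^ l) := by
        rw [← hd]; ring
    _ ≤ ‖p.leadingCoeff‖ *
          ((m.choose l : ℝ) * (p.roots.map (fun w => max (‖w‖) s)).prod) :=
        mul_le_mul_of_nonneg_left hesymm (norm_nonneg _)
    _ = (m.choose l : ℝ) * (‖p.leadingCoeff‖ *
          (p.roots.map (fun w => max (‖w‖) s)).prod) := by ring

theorem mean_value_circle (g : ℂ → ℂ) (hg : Differentiable ℂ g) (s : ℝ) (hs : 0 < s) :
    2 * π * ‖g 0‖ ≤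
      ∫ θ in Set.Ioo (-π) π, ‖g (circleMap 0 s θ)‖ := by
  have hd : DiffContOnCl ℂ g (ball (0:ℂ) s) := hg.diffContOnCl
  have hC := hd.circleIntegral_sub_inv_smul (w := 0) (mem_ball_self hs)
  rw [circleIntegral] at hC
  simp only [sub_zero, deriv_circleMap, smul_eq_mul] at hC
  have hInt : ∀ θ : ℝ, circleMap 0 s θ * Complex.I * ((circleMap 0 s θ)⁻¹ * g (circleMap 0 s θ))
      = Complex.I * g (circleMap 0 s θ) := by
    intro θ
    have hne : circleMap 0 s θ ≠ 0 := by
      simpa using circleMap_ne_center (hs.ne') (c := (0:ℂ)) (θ := θ)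
    field_simp
  simp only [hInt] at hC
  rw [intervalIntegral.integral_const_mul] at hC
  have h2 : (∫ θ in (0:ℝ)..(2*π), g (circleMap 0 s θ)) = (2 * π : ℝ) * g 0 := by
    apply mul_left_cancel₀ Complex.I_ne_zero
    rw [hC]
    push_cast
    ring
  have h3 : 2 * π * ‖g 0‖ ≤
      ∫ θ in (0:ℝ)..(2*π), ‖g (circleMap 0 s θ)‖ := by
    have := intervalIntegral.norm_integral_le_integral_norm (μ := volume)
      (f := fun θ => g (circleMap 0 s θ)) (a := 0) (b := 2*π) (by positivity)
    rw [h2] at this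
    simpa [abs_of_pos Real.pi_pos] using this
  have hper : Function.Periodic (fun θ => ‖g (circleMap 0 s θ)‖) (2*π) := by
    intro θ
    simp [(periodic_circleMap 0 s) θ]
  have h4 : (∫ θ in (0:ℝ)..(2*π), ‖g (circleMap 0 s θ)‖)
      = ∫ θ in (-π)..π, ‖g (circleMap 0 s θ)‖ := by
    have := hper.intervalIntegral_add_eq (0:ℝ) (-π)
    simp only [zero_add] at this
    rw [this]
    congr 1
    ring
  rw [h4] at h3
  rw [intervalIntegral.integral_of_le (by linarith [Real.pi_pos]), 
    MeasureTheory.integral_Ioc_eq_integral_Ioo] at h3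
  exact h3

private lemma diff_ms_prod (R : Multiset ℂ) (F : ℂ → ℂ → ℂ) (hF : ∀ w, Differentiable ℂ (F w)) :
    Differentiable ℂ (fun z => (R.map (fun w => F w z)).prod) := by
  induction R using Multiset.induction_on with
  | empty => simpa using differentiable_const (1:ℂ)
  | cons a S ih =>
    simp only [Multiset.map_cons, Multiset.prod_cons]
    exact (hF a).mul ih

theorem circle_lemma (s : ℝ) (hs : 0 < s) (p : Polynomial ℂ) (f : ℂ → ℂ)
    (hf : Differentiable ℂ f) :
    2 * π * (‖p.leadingCoeff‖ *
        (p.roots.map (fun w => max (‖w‖) s)).prod * ‖f 0‖) ≤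
      ∫ θ in Set.Ioo (-π) π,
        ‖p.eval (circleMap 0 s θ) * f (circleMap 0 s θ)‖ := by
  set F : ℂ → ℂ → ℂ := fun w z =>
    if s ≤ ‖w‖ then z - w else ((s:ℂ)^2 - (starRingEnd ℂ) w * z)/(s:ℂ) with hF
  set h : ℂ → ℂ := fun z => p.leadingCoeff * (p.roots.map (fun w => F w z)).prod * f z with hh
  have hFdiff : ∀ w, Differentiable ℂ (F w) := by
    intro w
    by_cases hw : s ≤ ‖w‖
    · simpa [hF, hw] using (differentiable_id.sub (differentiable_const w))
    · simp only [hF, hw, if_false]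
      apply Differentiable.div_const
      exact (differentiable_const _).sub ((differentiable_const _).mul differentiable_id)
  have hhdiff : Differentiable ℂ h :=
    ((differentiable_const _).mul (diff_ms_prod _ _ hFdiff)).mul hf
  -- value at 0
  have habs0 : ‖h 0‖ = ‖p.leadingCoeff‖ *
      (p.roots.map (fun w => max (‖w‖) s)).prod * ‖f 0‖ := by
    simp only [hh, norm_mul]
    congr 1
    congr 1
    rw [norm_ms_prod, Multiset.map_map]
    congr 1
    apply Multiset.map_congr rfl
    intro w _
    by_cases hw : s ≤ ‖w‖
    · simp [hF, hw, max_eq_left hw]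
    · push_neg at hw
      simp only [Function.comp_apply, hF, if_neg (not_le.2 hw), mul_zero, sub_zero]
      rw [norm_div, norm_pow]
      simp only [Complex.norm_real, Real.norm_eq_abs, abs_of_pos hs]
      rw [max_eq_right hw.le]
      field_simp
  -- equality on the circle
  have hcirc : ∀ θ : ℝ, ‖h (circleMap 0 s θ)‖ =
      ‖p.eval (circleMap 0 s θ) * f (circleMap 0 s θ)‖ := by
    intro θ
    set z := circleMap 0 s θ with hz
    have habsz : ‖z‖ = s := by
      rw [hz, norm_circleMap_zero, abs_of_pos hs]
    have hevalp : p.eval z = p.leadingCoeff * (p.roots.map (fun w => z - w)).prod := by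
      conv_lhs => rw [(IsAlgClosed.splits p).eq_prod_roots]
      rw [eval_mul, eval_C, eval_multiset_prod, Multiset.map_map]
      refine congrArg _ (congrArg Multiset.prod (Multiset.map_congr rfl ?_))
      intro w _
      simp
    rw [hevalp]
    simp only [hh, norm_mul]
    congr 1
    congr 1
    rw [norm_ms_prod, norm_ms_prod,
      Multiset.map_map, Multiset.map_map]
    congr 1
    apply Multiset.map_congr rfl
    intro w _
    by_cases hw : s ≤ ‖w‖
    · simp [hF, hw]
    · push_neg at hw
      simp only [Function.comp_apply, hF, if_neg (not_le.2 hw)]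
      have hzz : ((s:ℂ))^2 - (starRingEnd ℂ) w * z = z * (starRingEnd ℂ) (z - w) := by
        have : ((s:ℂ))^2 = z * (starRingEnd ℂ) z := by
          rw [Complex.mul_conj, ← Complex.sq_norm, habsz]
          norm_cast
        rw [this, map_sub]
        ring
      rw [hzz, norm_div, norm_mul, Complex.norm_conj]
      simp only [Complex.norm_real, Real.norm_eq_abs, abs_of_pos hs, habsz]
      field_simp
  -- combine with the mean value property
  have hmv := mean_value_circle h hhdiff s hs
  rw [habs0] at hmv
  calc 2 * π * (‖p.leadingCoeff‖ *
        (p.roots.map (fun w => max (‖w‖) s)).prod * ‖f 0‖)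
      ≤ ∫ θ in Set.Ioo (-π) π, ‖h (circleMap 0 s θ)‖ := hmv
    _ = _ := by
        apply integral_congr_ae
        filter_upwards with θ using hcirc θ

theorem polar_step (r : ℝ) (hr : 0 < r) (g : ℂ → ℝ) (hg : Continuous g) :
    ∫ z in ball (0:ℂ) r, g z =
      ∫ s in Set.Ioo 0 r, ∫ θ in Set.Ioo (-π) π, s * g (circleMap 0 s θ) := by
  have hsymm : ∀ q : ℝ × ℝ, Complex.polarCoord.symm q = circleMap 0 q.1 q.2 := by
    intro q
    simp [Complex.polarCoord_symm_apply, circleMap, Complex.exp_mul_I,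
      ← Complex.ofReal_cos, ← Complex.ofReal_sin]
  have key := Complex.integral_comp_polarCoord_symm ((ball (0:ℂ) r).indicator g)
  rw [integral_indicator measurableSet_ball] at key
  rw [← key]
  have hcongr : ∫ q in polarCoord.target, q.1 • (ball (0:ℂ) r).indicator g
        (Complex.polarCoord.symm q)
      = ∫ q in polarCoord.target,
          ((Set.Ioo (0:ℝ) r ×ˢ Set.Ioo (-π) π).indicator
            (fun q => q.1 * g (Complex.polarCoord.symm q))) q := by
    apply setIntegral_congr_fun (polarCoord.open_target.measurableSet)
    intro q hq
    rw [polarCoord_target] at hq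
    obtain ⟨hq1, hq2⟩ := hq
    have habs : ‖Complex.polarCoord.symm q‖ = q.1 := by
      rw [Complex.norm_polarCoord_symm, abs_of_pos hq1]
    have hmem : Complex.polarCoord.symm q ∈ ball (0:ℂ) r ↔ q.1 < r := by
      rw [mem_ball, dist_zero_right, habs]
    show q.1 • (ball (0:ℂ) r).indicator g (Complex.polarCoord.symm q) = _
    by_cases hlt : q.1 < r
    · rw [Set.indicator_of_mem (hmem.2 hlt) g,
        Set.indicator_of_mem (Set.mk_mem_prod (Set.mem_Ioo.2 ⟨hq1, hlt⟩) hq2), smul_eq_mul]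
    · rw [Set.indicator_of_notMem (fun h => hlt (hmem.1 h)) g,
        Set.indicator_of_notMem
          (fun (h : q ∈ Set.Ioo (0:ℝ) r ×ˢ Set.Ioo (-π) π) => hlt h.1.2), smul_zero]
  rw [hcongr, setIntegral_indicator (by measurability)]
  have hinter : polarCoord.target ∩ (Set.Ioo (0:ℝ) r ×ˢ Set.Ioo (-π) π)
      = Set.Ioo (0:ℝ) r ×ˢ Set.Ioo (-π) π := by
    apply Set.inter_eq_self_of_subset_right
    rw [polarCoord_target]
    apply Set.prod_mono_left
    exact fun x hx => hx.1
  rw [hinter]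
  have hvol : (volume : Measure (ℝ × ℝ)) = (volume : Measure ℝ).prod volume :=
    MeasureTheory.Measure.volume_eq_prod ℝ ℝ
  have hcont : Continuous (fun q : ℝ × ℝ => q.1 * g (Complex.polarCoord.symm q)) := by
    have : Continuous (fun q : ℝ × ℝ => Complex.polarCoord.symm q) := by
      simp only [Complex.polarCoord_symm_apply]
      exact (Complex.continuous_ofReal.comp continuous_fst).mul
        ((Complex.continuous_ofReal.comp (Real.continuous_cos.comp continuous_snd)).add
          ((Complex.continuous_ofReal.comp (Real.continuous_sin.comp continuous_snd)).mul
            continuous_const))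
    exact continuous_fst.mul (hg.comp this)
  have hIOn : IntegrableOn (fun q : ℝ × ℝ => q.1 * g (Complex.polarCoord.symm q))
      (Set.Ioo (0:ℝ) r ×ˢ Set.Ioo (-π) π) volume := by
    apply (hcont.continuousOn.integrableOn_compact
      (IsCompact.prod isCompact_Icc isCompact_Icc :
        IsCompact (Set.Icc (0:ℝ) r ×ˢ Set.Icc (-π) π))).mono_set
    exact Set.prod_mono Set.Ioo_subset_Icc_self Set.Ioo_subset_Icc_self
  rw [hvol] at hIOn ⊢
  rw [setIntegral_prod _ hIOn]
  apply setIntegral_congr_fun measurableSet_Ioo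
  intro s hs
  simp only
  congr 1
  funext θ
  rw [hsymm (s, θ)]

theorem polar_integrable (r : ℝ) (g : ℂ → ℝ) (hg : Continuous g) :
    IntegrableOn (fun s => ∫ θ in Set.Ioo (-π) π, s * g (circleMap 0 s θ))
      (Set.Ioo (0:ℝ) r) volume := by
  have hsymm : ∀ q : ℝ × ℝ, Complex.polarCoord.symm q = circleMap 0 q.1 q.2 := by
    intro q
    simp [Complex.polarCoord_symm_apply, circleMap, Complex.exp_mul_I,
      ← Complex.ofReal_cos, ← Complex.ofReal_sin]
  have hcont : Continuous (fun q : ℝ × ℝ => q.1 * g (Complex.polarCoord.symm q)) := by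
    have : Continuous (fun q : ℝ × ℝ => Complex.polarCoord.symm q) := by
      simp only [Complex.polarCoord_symm_apply]
      exact (Complex.continuous_ofReal.comp continuous_fst).mul
        ((Complex.continuous_ofReal.comp (Real.continuous_cos.comp continuous_snd)).add
          ((Complex.continuous_ofReal.comp (Real.continuous_sin.comp continuous_snd)).mul
            continuous_const))
    exact continuous_fst.mul (hg.comp this)
  have hIOn : IntegrableOn (fun q : ℝ × ℝ => q.1 * g (Complex.polarCoord.symm q))
      (Set.Ioo (0:ℝ) r ×ˢ Set.Ioo (-π) π) volume := by
    apply (hcont.continuousOn.integrableOn_compact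
      (IsCompact.prod isCompact_Icc isCompact_Icc :
        IsCompact (Set.Icc (0:ℝ) r ×ˢ Set.Icc (-π) π))).mono_set
    exact Set.prod_mono Set.Ioo_subset_Icc_self Set.Ioo_subset_Icc_self
  rw [IntegrableOn, MeasureTheory.Measure.volume_eq_prod ℝ ℝ,
    ← MeasureTheory.Measure.prod_restrict] at hIOn
  have := hIOn.integral_prod_left
  apply this.congr
  filter_upwards with s
  congr 1
  funext θ
  rw [hsymm (s, θ)]

theorem derivative_at_zero_disk_estimate (m l : ℕ) (hl : 1 ≤ l) (hlm : l ≤ m)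
    (r : ℝ) (hr : 0 < r)
    (p : Polynomial ℂ) (hp : p.natDegree ≤ m) (f : ℂ → ℂ) (hf : Differentiable ℂ f) :
    r ^ l * ‖(Polynomial.derivative^[l] p).eval 0 * f 0‖
      ≤ ((l + 2 : ℝ) * m.factorial / (2 * (m - l).factorial)) *
        ((Real.pi * r ^ 2)⁻¹ * ∫ z in ball (0 : ℂ) r, ‖p.eval z * f z‖) := by
  set g : ℂ → ℝ := fun z => ‖p.eval z * f z‖ with hg
  have hgc : Continuous g := continuous_norm.comp ((p.continuous_aeval).mul hf.continuous)
  set a : ℝ := ‖p.coeff l‖ with ha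
  set F : ℝ := ‖f 0‖ with hFdef
  set A : ℝ := (m.choose l : ℝ) with hA
  have hApos : (0:ℝ) < A := by
    rw [hA]
    exact_mod_cast Nat.choose_pos hlm
  -- rewrite the LHS
  have hLHS : ‖(Polynomial.derivative^[l] p).eval 0 * f 0‖
      = (l.factorial : ℝ) * a * F := by
    have heval : (Polynomial.derivative^[l] p).eval 0 = (l.factorial : ℂ) * p.coeff l := by
      rw [← Polynomial.coeff_zero_eq_eval_zero, Polynomial.coeff_iterate_derivative]
      simp [Nat.descFactorial_self, nsmul_eq_mul]
    rw [heval, norm_mul, norm_mul, Complex.norm_natCast]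
  -- the radial lower bound
  set c0 : ℝ := 2 * π * a * F / A with hc0
  have hc0nn : 0 ≤ c0 := by positivity
  have hradial : ∀ s ∈ Set.Ioo (0:ℝ) r,
      c0 * s ^ (l+1) ≤ ∫ θ in Set.Ioo (-π) π, s * g (circleMap 0 s θ) := by
    intro s hs
    obtain ⟨hs0, hsr⟩ := hs
    have hpull : (∫ θ in Set.Ioo (-π) π, s * g (circleMap 0 s θ))
        = s * ∫ θ in Set.Ioo (-π) π, g (circleMap 0 s θ) := by
      rw [integral_const_mul]
    rw [hpull]
    have h1 := circle_lemma s hs0 p f hf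
    have h2 := coeff_bound m l hlm s hs0 p hp
    set M : ℝ := (p.roots.map (fun w => max (‖w‖) s)).prod with hM
    set K : ℝ := ‖p.leadingCoeff‖ with hK
    have hMnn : 0 ≤ M := by
      rw [hM]
      apply Multiset.prod_nonneg
      intro x hx
      obtain ⟨w, -, rfl⟩ := Multiset.mem_map.1 hx
      exact le_trans hs0.le (le_max_right _ _)
    have hFnn : 0 ≤ F := norm_nonneg _
    have hKnn : 0 ≤ K := norm_nonneg _
    have hintnn : 2 * π * (K * M * F) ≤ ∫ θ in Set.Ioo (-π) π, g (circleMap 0 s θ) := h1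
    have h3 : a * s ^ l * (2 * π * F) ≤ A * ∫ θ in Set.Ioo (-π) π, g (circleMap 0 s θ) := by
      calc a * s ^ l * (2 * π * F) ≤ A * (K * M) * (2 * π * F) := by
            apply mul_le_mul_of_nonneg_right h2 (by positivity)
        _ = A * (2 * π * (K * M * F)) := by ring
        _ ≤ A * ∫ θ in Set.Ioo (-π) π, g (circleMap 0 s θ) :=
            mul_le_mul_of_nonneg_left hintnn hApos.le
    rw [hc0, div_mul_eq_mul_div, div_le_iff₀ hApos]
    calc 2 * π * a * F * s ^ (l+1) = (a * s ^ l * (2 * π * F)) * s := by ring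
      _ ≤ (A * ∫ θ in Set.Ioo (-π) π, g (circleMap 0 s θ)) * s :=
          mul_le_mul_of_nonneg_right h3 hs0.le
      _ = s * (∫ θ in Set.Ioo (-π) π, g (circleMap 0 s θ)) * A := by ring
  -- integrate the radial bound
  have hps := polar_step r hr g hgc
  have hlow : c0 * (r ^ (l+2) / (l+2)) ≤ ∫ z in ball (0:ℂ) r, g z := by
    rw [hps]
    have hmono : (∫ s in Set.Ioo (0:ℝ) r, c0 * s ^ (l+1))
        ≤ ∫ s in Set.Ioo (0:ℝ) r, ∫ θ in Set.Ioo (-π) π, s * g (circleMap 0 s θ) := by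
      apply setIntegral_mono_on _ (polar_integrable r g hgc) measurableSet_Ioo hradial
      apply Integrable.const_mul
      apply (continuous_pow (l+1)).continuousOn.integrableOn_compact isCompact_Icc |>.mono_set
      exact Set.Ioo_subset_Icc_self
    refine le_trans (le_of_eq ?_) hmono
    rw [integral_const_mul, ← MeasureTheory.integral_Ioc_eq_integral_Ioo,
      ← intervalIntegral.integral_of_le hr.le, integral_pow]
    congr 1
    push_cast
    ring
  -- final arithmetic
  rw [hLHS]
  have hfact : (m.factorial : ℝ) = A * l.factorial * (m - l).factorial := by
    rw [hA]
    exact_mod_cast (Nat.choose_mul_factorial_mul_factorial hlm).symm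
  have hfacpos : (0:ℝ) < (m - l).factorial := by exact_mod_cast Nat.factorial_pos _
  calc r ^ l * ((l.factorial : ℝ) * a * F)
      = ((l + 2 : ℝ) * m.factorial / (2 * (m - l).factorial)) *
          ((π * r ^ 2)⁻¹ * (c0 * (r ^ (l+2) / (l+2)))) := by
        rw [hfact, hc0]
        have : (r:ℝ) ^ (l+2) = r ^ l * r ^ 2 := by ring
        rw [this]
        field_simp
    _ ≤ ((l + 2 : ℝ) * m.factorial / (2 * (m - l).factorial)) *
          ((π * r ^ 2)⁻¹ * ∫ z in ball (0:ℂ) r, g z) := by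
        apply mul_le_mul_of_nonneg_left _ (by positivity)
        exact mul_le_mul_of_nonneg_left hlow (by positivity)
end

section
/- With δ(z) = c(1−|z|), 1/4 < r < 1 and 0 < c < min{(r−1/4)/4, 1/10}, the sets Q_δ(a) = {z : |P_a z − a| < δ, |P_a^⊥ z| < √δ} satisfy the engulfing property: there is an absolute constant C = 200 such that for every z ∈ Ω_r and every z' ∈ Q_{δ(z)}(z), one has Q_{δ(z)}(z) ⊂ Q_{C δ(z')}(z') and Q_{δ(z')}(z') ⊂ Q_{C δ(z)}(z). -/
open MeasureTheory Metric

/-- The nonisotropic neighborhood `Q_δ(a)` of a point `a ∈ ℂⁿ`. -/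
def Qnbhd {n : ℕ} (δ : ℝ) (a : EuclideanSpace ℂ (Fin n)) :
    Set (EuclideanSpace ℂ (Fin n)) :=
  {z | ‖(Submodule.orthogonalProjectionOnto (Submodule.span ℂ {a}) z : EuclideanSpace ℂ (Fin n)) - a‖ < δ ∧
       ‖z - (Submodule.orthogonalProjectionOnto (Submodule.span ℂ {a}) z : EuclideanSpace ℂ (Fin n))‖ <
         Real.sqrt δ}

section Aux

variable {n : ℕ}

/-- The inner product of `a` with the orthogonal part of `w` vanishes. -/
lemma inner_sub_proj_aux (a w : EuclideanSpace ℂ (Fin n)) :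
    (inner ℂ a (w - (Submodule.orthogonalProjectionOnto (Submodule.span ℂ {a}) w :
      EuclideanSpace ℂ (Fin n))) : ℂ) = 0 := by
  exact (Submodule.mem_orthogonal _ _).1
    (Submodule.sub_starProjection_mem_orthogonal (K := Submodule.span ℂ {a}) w) a
    (Submodule.mem_span_singleton_self a)

/-- The orthogonal projection is the closest point of the span. -/
lemma perp_norm_le_aux (a w u : EuclideanSpace ℂ (Fin n))
    (hu : u ∈ Submodule.span ℂ {a}) :
    ‖w - (Submodule.orthogonalProjectionOnto (Submodule.span ℂ {a}) w : EuclideanSpace ℂ (Fin n))‖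
      ≤ ‖w - u‖ := by
  set p := (Submodule.orthogonalProjectionOnto (Submodule.span ℂ {a}) w : EuclideanSpace ℂ (Fin n)) with hp
  have hpm : p ∈ Submodule.span ℂ {a} := (Submodule.orthogonalProjectionOnto _ w).2
  have horth : (inner ℂ (p - u) (w - p) : ℂ) = 0 :=
    (Submodule.mem_orthogonal _ _).1
      (Submodule.sub_starProjection_mem_orthogonal (K := Submodule.span ℂ {a}) w) _
      (Submodule.sub_mem _ hpm hu)
  have hpyth := norm_add_sq_eq_norm_sq_add_norm_sq_of_inner_eq_zero (p - u) (w - p) horth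
  have hkey : (p - u) + (w - p) = w - u := by abel
  rw [hkey] at hpyth
  nlinarith [norm_nonneg (w - u), norm_nonneg (w - p), norm_nonneg (p - u)]

/-- Pythagoras for the projection decomposition. -/
lemma norm_sq_proj_aux (a w : EuclideanSpace ℂ (Fin n)) :
    ‖w‖ * ‖w‖ =
      ‖(Submodule.orthogonalProjectionOnto (Submodule.span ℂ {a}) w : EuclideanSpace ℂ (Fin n))‖ *
        ‖(Submodule.orthogonalProjectionOnto (Submodule.span ℂ {a}) w : EuclideanSpace ℂ (Fin n))‖ +
      ‖w - (Submodule.orthogonalProjectionOnto (Submodule.span ℂ {a}) w : EuclideanSpace ℂ (Fin n))‖ *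
        ‖w - (Submodule.orthogonalProjectionOnto (Submodule.span ℂ {a}) w : EuclideanSpace ℂ (Fin n))‖ := by
  set p := (Submodule.orthogonalProjectionOnto (Submodule.span ℂ {a}) w : EuclideanSpace ℂ (Fin n)) with hp
  have hpm : p ∈ Submodule.span ℂ {a} := (Submodule.orthogonalProjectionOnto _ w).2
  have horth : (inner ℂ p (w - p) : ℂ) = 0 :=
    (Submodule.mem_orthogonal _ _).1
      (Submodule.sub_starProjection_mem_orthogonal (K := Submodule.span ℂ {a}) w) _ hpm
  have hpyth := norm_add_sq_eq_norm_sq_add_norm_sq_of_inner_eq_zero p (w - p) horth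
  have hkey : p + (w - p) = w := by abel
  rw [hkey] at hpyth
  linarith

/-- Norm formula for the tangential deviation. -/
lemma proj_sub_self_norm_aux (a w : EuclideanSpace ℂ (Fin n)) (ha : a ≠ 0) :
    ‖(Submodule.orthogonalProjectionOnto (Submodule.span ℂ {a}) w : EuclideanSpace ℂ (Fin n)) - a‖
      = ‖(inner ℂ a (w - a) : ℂ)‖ / ‖a‖ := by
  have ha' : (0:ℝ) < ‖a‖ := norm_pos_iff.2 ha
  have h2 : (((‖a‖ : ℝ) ^ 2 : ℝ) : ℂ) ≠ 0 := by
    simp only [ne_eq, Complex.ofReal_eq_zero]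
    positivity
  have key : (Submodule.orthogonalProjectionOnto (Submodule.span ℂ {a}) w : EuclideanSpace ℂ (Fin n)) - a
      = (((inner ℂ a w : ℂ) - ((‖a‖ ^ 2 : ℝ) : ℂ)) / ((‖a‖ ^ 2 : ℝ) : ℂ)) • a := by
    rw [Submodule.coe_orthogonalProjectionOnto_apply, Submodule.starProjection_singleton, sub_div, div_self h2, sub_smul, one_smul]
    norm_cast
  rw [key, norm_smul]
  have hinner : (inner ℂ a (w - a) : ℂ) = (inner ℂ a w : ℂ) - ((‖a‖ ^ 2 : ℝ) : ℂ) := by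
    rw [inner_sub_right, inner_self_eq_norm_sq_to_K]
    norm_num
  rw [← hinner, norm_div]
  have : ‖(((‖a‖ ^ 2 : ℝ)) : ℂ)‖ = ‖a‖ ^ 2 := by
    rw [Complex.norm_real, Real.norm_of_nonneg (by positivity)]
  rw [this]
  field_simp

/-- Bound for the inner product of `a` with `w - a` in terms of the tangential deviation. -/
lemma inner_bound_aux (a w : EuclideanSpace ℂ (Fin n)) {D : ℝ}
    (h : ‖(Submodule.orthogonalProjectionOnto (Submodule.span ℂ {a}) w :
      EuclideanSpace ℂ (Fin n)) - a‖ < D) :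
    ‖(inner ℂ a (w - a) : ℂ)‖ ≤ ‖a‖ * D := by
  set p := (Submodule.orthogonalProjectionOnto (Submodule.span ℂ {a}) w : EuclideanSpace ℂ (Fin n)) with hp
  have h0 : (inner ℂ a (w - p) : ℂ) = 0 := inner_sub_proj_aux a w
  have hdecomp : (inner ℂ a (w - a) : ℂ) = inner ℂ a (w - p) + inner ℂ a (p - a) := by
    rw [← inner_add_right]
    congr 1
    abel
  rw [hdecomp, h0, zero_add]
  calc ‖(inner ℂ a (p - a) : ℂ)‖ ≤ ‖a‖ * ‖p - a‖ := norm_inner_le_norm a (p - a)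
    _ ≤ ‖a‖ * D := by
        apply mul_le_mul_of_nonneg_left h.le (norm_nonneg a)

end Aux

set_option maxHeartbeats 1000000 in
theorem Qnbhd_engulfing (n : ℕ) (r c : ℝ) (hr : 1 / 4 < r) (hr1 : r < 1)
    (hc : 0 < c) (hc1 : c < min ((r - 1 / 4) / 4) (1 / 10))
    (z z' : EuclideanSpace ℂ (Fin n))
    (hz : r < ‖z‖) (hz1 : ‖z‖ < 1)
    (hz' : z' ∈ Qnbhd (c * (1 - ‖z‖)) z) :
    Qnbhd (c * (1 - ‖z‖)) z ⊆ Qnbhd (200 * (c * (1 - ‖z'‖))) z' ∧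
    Qnbhd (c * (1 - ‖z'‖)) z' ⊆ Qnbhd (200 * (c * (1 - ‖z‖))) z := by
  have hc10 : c < 1 / 10 := lt_of_lt_of_le hc1 (min_le_right _ _)
  have hcr : c < (r - 1 / 4) / 4 := lt_of_lt_of_le hc1 (min_le_left _ _)
  have hm : 1 / 4 < ‖z‖ := lt_trans hr hz
  set m := ‖z‖ with hm_def
  set m' := ‖z'‖ with hm'_def
  have hm0 : (0:ℝ) < m := by linarith
  have hz0 : z ≠ 0 := by
    intro h
    rw [h] at hm_def
    simp only [norm_zero] at hm_def
    linarith
  set t : ℝ := 1 - m with ht_def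
  have ht : 0 < t := by linarith [hz1]
  have ht34 : t < 3 / 4 := by rw [ht_def]; linarith
  set δ : ℝ := c * t with hδ_def
  have hδ : 0 < δ := mul_pos hc ht
  have hδt : δ ≤ (1/10) * t := by
    rw [hδ_def]
    exact mul_le_mul_of_nonneg_right hc10.le ht.le
  have hδ340 : δ ≤ 3 / 40 := by nlinarith only [hδt, ht34, ht]
  have hδc : δ < c := by
    have := mul_lt_mul_of_pos_left (show t < 1 by linarith) hc
    simpa using this
  set s : ℝ := Real.sqrt δ with hs_def
  have hs0 : 0 ≤ s := Real.sqrt_nonneg δ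
  have hs2 : s ^ 2 = δ := Real.sq_sqrt hδ.le
  have hs1 : s ≤ 1 := by nlinarith only [hs2, hδ340, hs0]
  have hδs : δ ≤ s := by nlinarith only [hs2, hs0, hs1]
  -- extract hypotheses on z'
  obtain ⟨hz'1, hz'2⟩ := hz'
  set p' := (Submodule.orthogonalProjectionOnto (Submodule.span ℂ {z}) z' : EuclideanSpace ℂ (Fin n))
    with hp'_def
  have hp'ub : ‖p'‖ ≤ m + δ := by
    have h1 : ‖p'‖ - ‖z‖ ≤ ‖p' - z‖ := norm_sub_norm_le _ _
    linarith
  have hp'lb : m - δ ≤ ‖p'‖ := by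
    have h1 : ‖z‖ - ‖p'‖ ≤ ‖p' - z‖ := by
      rw [norm_sub_rev]; exact norm_sub_norm_le _ _
    linarith
  have hpyth := norm_sq_proj_aux z z'
  rw [← hp'_def, ← hm'_def] at hpyth
  have hm'0 : 0 ≤ m' := norm_nonneg z'
  have hmδ0 : (0:ℝ) ≤ m - δ := by linarith
  have hm'lb : m - δ ≤ m' := by
    have h1 : ‖p'‖ ≤ m' := by
      nlinarith only [hpyth, norm_nonneg (z' - p'), norm_nonneg p', hm'0]
    linarith
  have hm'14 : 1 / 4 < m' := by linarith
  have hz'0 : z' ≠ 0 := by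
    intro h
    rw [h] at hm'_def
    simp only [norm_zero] at hm'_def
    linarith
  have hm'sq_ub : m' * m' ≤ (m + δ) ^ 2 + δ := by
    have h1 : ‖p'‖ * ‖p'‖ ≤ (m + δ) ^ 2 :=
      by nlinarith only [hp'ub, norm_nonneg p']
    have h2 : ‖z' - p'‖ * ‖z' - p'‖ ≤ δ :=
      by nlinarith only [hz'2, norm_nonneg (z' - p'), hs2, hs0]
    linarith
  have hm'lt1 : m' < 1 := by
    nlinarith only [hm'sq_ub, hm'0, hm, hz1, hc, hc10, hδ_def, ht_def, hδt, ht, ht34, hδ]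
  set t' : ℝ := 1 - m' with ht'_def
  have ht' : 0 < t' := by linarith
  have hm'sq_lb : (m - δ) * (m - δ) ≤ m' * m' := by
    nlinarith only [hm'lb, hmδ0, hm'0]
  have ht'ub : t' ≤ (11/5) * t := by
    have key : 1 - m' ≤ (11/5) * t := by
      nlinarith only [hm'sq_lb, hm'lt1, hm'0, hmδ0, hδt, ht, ht34, hδ, ht_def,
        mul_nonneg hm'0 (by linarith : (0:ℝ) ≤ 1 - m')]
    linarith
  have ht'lb : (9/20) * t ≤ t' := by
    have key : (9/20) * t ≤ 1 - m' := by
      nlinarith only [hm'sq_ub, hm'lt1, hm'0, hδt, ht, ht34, hδ, ht_def,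
        mul_nonneg (by linarith : (0:ℝ) ≤ 1 - m') (by linarith : (0:ℝ) ≤ 1 - m')]
    linarith
  set δ' : ℝ := c * t' with hδ'_def
  have hδ' : 0 < δ' := mul_pos hc ht'
  have hδ'lb : (9/20) * δ ≤ δ' := by
    have := mul_le_mul_of_nonneg_left ht'lb hc.le
    rw [hδ'_def, hδ_def]; linarith [this]
  have hδ'ub : δ' ≤ (11/5) * δ := by
    have := mul_le_mul_of_nonneg_left ht'ub hc.le
    rw [hδ'_def, hδ_def]; linarith [this]
  set s' : ℝ := Real.sqrt δ' with hs'_def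
  have hs'0 : 0 ≤ s' := Real.sqrt_nonneg δ'
  have hs'2 : s' ^ 2 = δ' := Real.sq_sqrt hδ'.le
  have hs'ub : s' ≤ (3/2) * s := by
    have h1 : δ' ≤ (9/4) * δ := by linarith
    have h2 : s' ≤ Real.sqrt ((9/4) * δ) := Real.sqrt_le_sqrt h1
    have h3 : Real.sqrt ((9/4) * δ) = (3/2) * s := by
      rw [Real.sqrt_mul (by norm_num : (0:ℝ) ≤ 9/4) δ, hs_def]
      congr 1
      rw [show (9/4 : ℝ) = (3/2)^2 by norm_num, Real.sqrt_sq (by norm_num : (0:ℝ) ≤ 3/2)]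
    linarith
  -- distance between z and z'
  have hzz' : ‖z' - z‖ < δ + s := by
    calc ‖z' - z‖ ≤ ‖z' - p'‖ + ‖p' - z‖ := by
          have h : z' - z = (z' - p') + (p' - z) := by abel
          rw [h]; exact norm_add_le _ _
      _ < s + δ := add_lt_add hz'2 hz'1
      _ = δ + s := by ring
  -- inner product of z with z' - z is small
  have hA : ‖(inner ℂ z (z' - z) : ℂ)‖ ≤ m * δ := inner_bound_aux z z' hz'1
  have hAδ : ‖(inner ℂ z (z' - z) : ℂ)‖ ≤ δ := by
    nlinarith only [hA, hz1, hδ, norm_nonneg (inner ℂ z (z' - z) : ℂ), hm0]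
  constructor
  · -- first inclusion
    intro w hw
    obtain ⟨hw1, hw2⟩ := hw
    set p := (Submodule.orthogonalProjectionOnto (Submodule.span ℂ {z}) w : EuclideanSpace ℂ (Fin n))
      with hp_def
    have hwz : ‖w - z‖ < δ + s := by
      calc ‖w - z‖ ≤ ‖w - p‖ + ‖p - z‖ := by
            have h : w - z = (w - p) + (p - z) := by abel
            rw [h]; exact norm_add_le _ _
        _ < s + δ := add_lt_add hw2 hw1
        _ = δ + s := by ring
    have hwz' : ‖w - z'‖ < 2*δ + 2*s := by
      calc ‖w - z'‖ ≤ ‖w - z‖ + ‖z' - z‖ := by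
            have h : w - z' = (w - z) - (z' - z) := by abel
            rw [h]; exact norm_sub_le _ _
        _ < (δ + s) + (δ + s) := add_lt_add hwz hzz'
        _ = 2*δ + 2*s := by ring
    constructor
    · -- tangential estimate
      show ‖(Submodule.orthogonalProjectionOnto (Submodule.span ℂ {z'}) w : EuclideanSpace ℂ (Fin n)) - z'‖
        < 200 * δ'
      rw [proj_sub_self_norm_aux z' w hz'0, div_lt_iff₀ (by positivity : (0:ℝ) < ‖z'‖)]
      have hdecomp : (inner ℂ z' (w - z') : ℂ)
          = inner ℂ (z' - z) (w - z') + inner ℂ z (w - z) + inner ℂ z (z - z') := by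
        simp only [inner_sub_left, inner_sub_right]
        ring
      have hB1 : ‖(inner ℂ (z' - z) (w - z') : ℂ)‖ ≤ (δ + s) * (2*δ + 2*s) := by
        calc ‖(inner ℂ (z' - z) (w - z') : ℂ)‖ ≤ ‖z' - z‖ * ‖w - z'‖ := norm_inner_le_norm _ _
          _ ≤ (δ + s) * (2*δ + 2*s) :=
              mul_le_mul hzz'.le hwz'.le (norm_nonneg _) (by positivity)
      have hB2 : ‖(inner ℂ z (w - z) : ℂ)‖ ≤ δ := by
        have h := inner_bound_aux z w hw1
        nlinarith only [h, hz1, hδ, norm_nonneg (inner ℂ z (w - z) : ℂ), hm0]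
      have hB3 : ‖(inner ℂ z (z - z') : ℂ)‖ ≤ δ := by
        rw [show z - z' = -(z' - z) by abel, inner_neg_right, norm_neg]
        exact hAδ
      have htot : ‖(inner ℂ z' (w - z') : ℂ)‖ ≤ (δ + s) * (2*δ + 2*s) + δ + δ := by
        rw [hdecomp]
        have n1 := norm_add_le ((inner ℂ (z' - z) (w - z') : ℂ) + inner ℂ z (w - z))
          (inner ℂ z (z - z') : ℂ)
        have n2 := norm_add_le (inner ℂ (z' - z) (w - z') : ℂ) (inner ℂ z (w - z) : ℂ)
        linarith
      have hfin : (δ + s) * (2*δ + 2*s) + δ + δ < 200 * δ' * m' := by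
        have e1 : δ + s ≤ 2 * s := by linarith
        have e2 : 2*δ + 2*s ≤ 4 * s := by linarith
        have e3 : (δ + s) * (2*δ + 2*s) ≤ (2*s) * (4*s) :=
          mul_le_mul e1 e2 (by linarith) (by linarith)
        nlinarith only [e3, hs2, hδ, hδ'lb, hm'14, hδ']
      calc ‖(inner ℂ z' (w - z') : ℂ)‖ ≤ (δ + s) * (2*δ + 2*s) + δ + δ := htot
        _ < 200 * δ' * m' := hfin
    · -- perpendicular estimate
      show ‖w - (Submodule.orthogonalProjectionOnto (Submodule.span ℂ {z'}) w : EuclideanSpace ℂ (Fin n))‖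
        < Real.sqrt (200 * δ')
      have hperp : ‖w - (Submodule.orthogonalProjectionOnto (Submodule.span ℂ {z'}) w :
          EuclideanSpace ℂ (Fin n))‖ ≤ ‖w - z'‖ :=
        perp_norm_le_aux z' w z' (Submodule.mem_span_singleton_self z')
      rw [Real.lt_sqrt (norm_nonneg _)]
      have h1 : ‖w - (Submodule.orthogonalProjectionOnto (Submodule.span ℂ {z'}) w :
          EuclideanSpace ℂ (Fin n))‖ < 2*δ + 2*s := lt_of_le_of_lt hperp hwz'
      have h2 := norm_nonneg (w - (Submodule.orthogonalProjectionOnto (Submodule.span ℂ {z'}) w :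
          EuclideanSpace ℂ (Fin n)))
      have h3 : (2*δ + 2*s)^2 < 200 * δ' := by
        nlinarith only [hs2, hδ, hδ'lb, hδs, hs0, hδ340]
      nlinarith only [h1, h2, h3]
  · -- second inclusion
    intro w hw
    obtain ⟨hw1, hw2⟩ := hw
    set q := (Submodule.orthogonalProjectionOnto (Submodule.span ℂ {z'}) w : EuclideanSpace ℂ (Fin n))
      with hq_def
    have hw1' : ‖q - z'‖ < δ' := hw1
    have hw2' : ‖w - q‖ < s' := hw2
    have hwz' : ‖w - z'‖ < δ' + s' := by
      calc ‖w - z'‖ ≤ ‖w - q‖ + ‖q - z'‖ := by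
            have h : w - z' = (w - q) + (q - z') := by abel
            rw [h]; exact norm_add_le _ _
        _ < s' + δ' := add_lt_add hw2' hw1'
        _ = δ' + s' := by ring
    have hwz : ‖w - z‖ < δ' + s' + δ + s := by
      calc ‖w - z‖ ≤ ‖w - z'‖ + ‖z' - z‖ := by
            have h : w - z = (w - z') + (z' - z) := by abel
            rw [h]; exact norm_add_le _ _
        _ < (δ' + s') + (δ + s) := add_lt_add hwz' hzz'
        _ = δ' + s' + δ + s := by ring
    constructor
    · -- tangential estimate
      show ‖(Submodule.orthogonalProjectionOnto (Submodule.span ℂ {z}) w : EuclideanSpace ℂ (Fin n)) - z‖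
        < 200 * δ
      rw [proj_sub_self_norm_aux z w hz0, div_lt_iff₀ hm0]
      have hdecomp : (inner ℂ z (w - z) : ℂ)
          = inner ℂ (z - z') (w - z) + inner ℂ z' (w - z') + inner ℂ z' (z' - z) := by
        simp only [inner_sub_left, inner_sub_right]
        ring
      have hB1 : ‖(inner ℂ (z - z') (w - z) : ℂ)‖ ≤ (δ + s) * (δ' + s' + δ + s) := by
        calc ‖(inner ℂ (z - z') (w - z) : ℂ)‖ ≤ ‖z - z'‖ * ‖w - z‖ := norm_inner_le_norm _ _
          _ ≤ (δ + s) * (δ' + s' + δ + s) := by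
              rw [norm_sub_rev]
              exact mul_le_mul hzz'.le hwz.le (norm_nonneg _) (by positivity)
      have hB2 : ‖(inner ℂ z' (w - z') : ℂ)‖ ≤ δ' := by
        have h := inner_bound_aux z' w hw1'
        nlinarith only [h, hm'lt1, hδ', norm_nonneg (inner ℂ z' (w - z') : ℂ), hm'0]
      have hB3 : ‖(inner ℂ z' (z' - z) : ℂ)‖ ≤ δ + (δ + s)^2 := by
        have hd : (inner ℂ z' (z' - z) : ℂ) = inner ℂ z (z' - z) + inner ℂ (z' - z) (z' - z) := by
          simp only [inner_sub_left]
          ring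
        rw [hd]
        have n1 := norm_add_le (inner ℂ z (z' - z) : ℂ) (inner ℂ (z' - z) (z' - z) : ℂ)
        have h1 : ‖(inner ℂ (z' - z) (z' - z) : ℂ)‖ ≤ ‖z' - z‖ * ‖z' - z‖ :=
          norm_inner_le_norm _ _
        have h2 : ‖z' - z‖ * ‖z' - z‖ ≤ (δ + s)^2 := by
          nlinarith only [hzz', norm_nonneg (z' - z)]
        linarith
      have htot : ‖(inner ℂ z (w - z) : ℂ)‖
          ≤ (δ + s) * (δ' + s' + δ + s) + δ' + (δ + (δ + s)^2) := by
        rw [hdecomp]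
        have n1 := norm_add_le ((inner ℂ (z - z') (w - z) : ℂ) + inner ℂ z' (w - z'))
          (inner ℂ z' (z' - z) : ℂ)
        have n2 := norm_add_le (inner ℂ (z - z') (w - z) : ℂ) (inner ℂ z' (w - z') : ℂ)
        linarith
      have hfin : (δ + s) * (δ' + s' + δ + s) + δ' + (δ + (δ + s)^2) < 200 * δ * m := by
        have e1 : δ + s ≤ 2 * s := by linarith
        have e2 : δ' + s' + δ + s ≤ (57/10) * s := by
          have : δ' ≤ (11/5) * s := by nlinarith only [hδ'ub, hδs]
          linarith [hs'ub]
        have e3 : (δ + s) * (δ' + s' + δ + s) ≤ (2*s) * ((57/10)*s) :=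
          mul_le_mul e1 e2 (by positivity) (by linarith)
        have e4 : (δ + s)^2 ≤ (2*s)^2 := by nlinarith only [e1, hδ, hs0]
        nlinarith only [e3, e4, hs2, hδ, hm, hδ'ub, hδs]
      calc ‖(inner ℂ z (w - z) : ℂ)‖
          ≤ (δ + s) * (δ' + s' + δ + s) + δ' + (δ + (δ + s)^2) := htot
        _ < 200 * δ * m := hfin
    · -- perpendicular estimate
      show ‖w - (Submodule.orthogonalProjectionOnto (Submodule.span ℂ {z}) w : EuclideanSpace ℂ (Fin n))‖
        < Real.sqrt (200 * δ)
      have hperp : ‖w - (Submodule.orthogonalProjectionOnto (Submodule.span ℂ {z}) w :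
          EuclideanSpace ℂ (Fin n))‖ ≤ ‖w - z‖ :=
        perp_norm_le_aux z w z (Submodule.mem_span_singleton_self z)
      rw [Real.lt_sqrt (norm_nonneg _)]
      have h1 : ‖w - (Submodule.orthogonalProjectionOnto (Submodule.span ℂ {z}) w :
          EuclideanSpace ℂ (Fin n))‖ < δ' + s' + δ + s := lt_of_le_of_lt hperp hwz
      have h2 := norm_nonneg (w - (Submodule.orthogonalProjectionOnto (Submodule.span ℂ {z}) w :
          EuclideanSpace ℂ (Fin n)))
      have h3 : (δ' + s' + δ + s)^2 < 200 * δ := by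
        have e2 : δ' + s' + δ + s ≤ (57/10) * s := by
          have : δ' ≤ (11/5) * s := by nlinarith only [hδ'ub, hδs]
          linarith [hs'ub]
        nlinarith only [e2, hs2, hδ, hs0, hδ', hs'0, hδs]
      nlinarith only [h1, h2, h3]
end
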